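/- arXiv:1512.03572 — 4 statements merged into one kernel-verified Lean document; each statement's English description precedes it below -/
import Mathlib

section
/- The quotient metric space (𝔾*, d) of countable connected rooted graphs modulo d = 0 is complete: every Cauchy sequence converges. -/
open scoped ENNReal

structure RGraph where
  verts : Set ℕ
  adj : SimpleGraph verts
  root : verts

namespace RGraph

def Iso (A B : RGraph) : Prop :=
  ∃ e : A.adj ≃g B.adj, e A.root = B.root

def HasRCIS (A F : RGraph) : Prop :=
  ∃ S : Set A.verts, ∃ hroot : A.root ∈ S,
    (A.adj.induce S).Connected ∧
    ∃ e : A.adj.induce S ≃g F.adj, (e ⟨A.root, hroot⟩ : F.verts) = F.root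

/-- `A` and `B` contain exactly the same isomorphism types of rooted connected
induced subgraphs on at most `r` vertices. -/
def simUpTo (r : ℕ) (A B : RGraph) : Prop :=
  ∀ F : RGraph, Finite F.verts → Nat.card F.verts ≤ r →
    (A.HasRCIS F ↔ B.HasRCIS F)

/-- The radius of similarity `r(A,B) ∈ ℕ ∪ {∞}`. -/
noncomputable def rSimE (A B : RGraph) : ℕ∞ :=
  sSup {x : ℕ∞ | ∃ r : ℕ, x = (r : ℕ∞) ∧ simUpTo r A B}

/-- The similarity pseudometric `d(A,B) = 1/r(A,B)`, with `1/∞ = 0`. -/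
noncomputable def dR (A B : RGraph) : ℝ≥0∞ :=
  (sSup {x : ℝ≥0∞ | ∃ r : ℕ, x = (r : ℝ≥0∞) ∧ simUpTo r A B})⁻¹

end RGraph

namespace CG
open SimpleGraph
noncomputable def induceInduceIso {V : Type*} (G : SimpleGraph V) (S : Set V) (T : Set S) :
    (G.induce S).induce T ≃g G.induce (Subtype.val '' T) where
  toEquiv := Equiv.Set.image _ T Subtype.val_injective
  map_rel_iff' := by
    rintro ⟨⟨a, ha⟩, ha'⟩ ⟨⟨b, hb⟩, hb'⟩
    simp [Equiv.Set.image, Equiv.Set.imageOfInjOn]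
def isoInduce {V W : Type*} {G : SimpleGraph V} {H : SimpleGraph W} (e : G ≃g H) (T : Set W) :
    G.induce (⇑e ⁻¹' T) ≃g H.induce T where
  toEquiv := e.toEquiv.subtypeEquiv (fun _ => Iff.rfl)
  map_rel_iff' := by
    rintro ⟨a, ha⟩ ⟨b, hb⟩
    exact e.map_rel_iff
lemma conn_of_iso {V W : Type*} {G : SimpleGraph V} {H : SimpleGraph W} (e : G ≃g H)
    (h : G.Connected) : H.Connected := h.map e.toHom e.toEquiv.surjective
def induceHomOfLE {V : Type*} (G : SimpleGraph V) {S T : Set V} (h : S ⊆ T) :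
    G.induce S →g G.induce T where
  toFun := fun a => ⟨a.1, h a.2⟩
  map_rel' := fun hadj => hadj

open RGraph

lemma hasRCIS_connected {A F : RGraph} (h : A.HasRCIS F) : F.adj.Connected := by
  obtain ⟨S, hS, hScon, e, he⟩ := h
  exact conn_of_iso e hScon

lemma hasRCIS_finite {A F : RGraph} (hA : Finite A.verts) (h : A.HasRCIS F) :
    Finite F.verts := by
  obtain ⟨S, hS, hScon, e, he⟩ := h
  have : Finite S := Subtype.finite
  exact Finite.of_equiv _ e.toEquiv

lemma hasRCIS_trans {A W F : RGraph} (h1 : A.HasRCIS W) (h2 : W.HasRCIS F) :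
    A.HasRCIS F := by
  obtain ⟨S, hS, hScon, e, he⟩ := h1
  obtain ⟨T, hT, hTcon, f, hf⟩ := h2
  have hmemT : (⟨A.root, hS⟩ : S) ∈ (⇑e ⁻¹' T : Set S) := by
    simp only [Set.mem_preimage, he]; exact hT
  refine ⟨Subtype.val '' (⇑e ⁻¹' T), ⟨⟨A.root, hS⟩, hmemT, rfl⟩, ?_, ?_⟩
  · exact conn_of_iso ((induceInduceIso A.adj S _).symm.trans (isoInduce e T)).symm hTcon
  · refine ⟨((induceInduceIso A.adj S _).symm.trans (isoInduce e T)).trans f, ?_⟩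
    have h0 : (induceInduceIso A.adj S (⇑e ⁻¹' T)) ⟨⟨A.root, hS⟩, hmemT⟩
        = ⟨A.root, ⟨⟨A.root, hS⟩, hmemT, rfl⟩⟩ := rfl
    have h1 : ((induceInduceIso A.adj S (⇑e ⁻¹' T)).symm ⟨A.root, ⟨⟨A.root, hS⟩, hmemT, rfl⟩⟩)
        = ⟨⟨A.root, hS⟩, hmemT⟩ := by
      rw [← h0, RelIso.symm_apply_apply]
    show f ((isoInduce e T) ((induceInduceIso A.adj S _).symm ⟨A.root, _⟩)) = F.root
    rw [h1]
    have h2 : (isoInduce e T) ⟨⟨A.root, hS⟩, hmemT⟩ = ⟨W.root, hT⟩ := by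
      apply Subtype.ext
      show (e ⟨A.root, hS⟩ : W.verts) = W.root
      exact he
    rw [h2, hf]

lemma hasRCIS_congr_right {A F F' : RGraph} (h : Iso F F') :
    A.HasRCIS F ↔ A.HasRCIS F' := by
  obtain ⟨g, hg⟩ := h
  constructor
  · rintro ⟨S, hS, hScon, e, he⟩
    exact ⟨S, hS, hScon, e.trans g, by rw [RelIso.trans_apply, he, hg]⟩
  · rintro ⟨S, hS, hScon, e, he⟩
    refine ⟨S, hS, hScon, e.trans g.symm, ?_⟩
    rw [RelIso.trans_apply, he, ← hg, RelIso.symm_apply_apply]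

lemma simUpTo_mono {j r : ℕ} {A B : RGraph} (h : j ≤ r) (hs : simUpTo r A B) :
    simUpTo j A B := fun F hF hc => hs F hF (hc.trans h)


/-- finite partial graph on `{0,...,c}` with root `0`. -/
def pg (c : ℕ) (A : ℕ → ℕ → Prop) : RGraph where
  verts := Set.Iio (c+1)
  adj := { Adj := fun a b => a.1 ≠ b.1 ∧ (A a.1 b.1 ∨ A b.1 a.1),
           symm := ⟨by rintro a b ⟨h1, h2⟩; exact ⟨Ne.symm h1, h2.symm⟩⟩,
           loopless := ⟨fun a h => h.1 rfl⟩ }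
  root := ⟨0, Nat.succ_pos c⟩

def iioFinEquiv (c : ℕ) : ↥(Set.Iio c : Set ℕ) ≃ Fin c where
  toFun := fun a => ⟨a.1, a.2⟩
  invFun := fun a => ⟨a.1, a.2⟩
  left_inv := fun a => rfl
  right_inv := fun a => rfl

instance pg_finite (c : ℕ) (A : ℕ → ℕ → Prop) : Finite (pg c A).verts :=
  Finite.of_equiv _ (iioFinEquiv (c+1)).symm

lemma pg_card (c : ℕ) (A : ℕ → ℕ → Prop) : Nat.card (pg c A).verts = c + 1 := by
  show Nat.card ↥(Set.Iio (c+1) : Set ℕ) = c + 1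
  rw [Nat.card_congr (iioFinEquiv (c+1)), Nat.card_eq_fintype_card, Fintype.card_fin]

abbrev CanG := Σ n : ℕ, (Fin (n+1) → Fin (n+1) → Prop)

def sz (p : CanG) : ℕ := p.1 + 1

def toCan (p : CanG) : RGraph :=
  pg p.1 (fun a b => ∃ (ha : a < p.1+1) (hb : b < p.1+1), p.2 ⟨a, ha⟩ ⟨b, hb⟩)

instance toCan_finite (p : CanG) : Finite (toCan p).verts := pg_finite _ _

lemma toCan_card (p : CanG) : Nat.card (toCan p).verts = sz p := pg_card _ _

lemma canG_countable : ∃ f : ℕ → CanG, Function.Surjective f :=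
  exists_surjective_nat CanG

/-- every finite rooted graph is isomorphic to a canonical one -/
lemma exists_can (F : RGraph) (hF : Finite F.verts) :
    ∃ p : CanG, sz p = Nat.card F.verts ∧ Iso (toCan p) F := by
  have hne : Nonempty F.verts := ⟨F.root⟩
  have hpos : 0 < Nat.card F.verts := Nat.card_pos
  obtain ⟨n, hn⟩ : ∃ n, Nat.card F.verts = n + 1 := ⟨Nat.card F.verts - 1, by omega⟩
  haveI : Fintype F.verts := Fintype.ofFinite _
  have hcard : Fintype.card F.verts = n + 1 := by
    rw [← Nat.card_eq_fintype_card, hn]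
  let e0 : F.verts ≃ Fin (n+1) := Fintype.equivFinOfCardEq hcard
  let e : F.verts ≃ Fin (n+1) := e0.trans (Equiv.swap (e0 F.root) 0)
  have he : e F.root = 0 := by simp [e]
  refine ⟨⟨n, fun a b => F.adj.Adj (e.symm a) (e.symm b)⟩, by rw [hn]; rfl, ?_⟩
  have key : ∀ (a b : (toCan ⟨n, fun a b => F.adj.Adj (e.symm a) (e.symm b)⟩).verts),
      (toCan _).adj.Adj a b ↔ F.adj.Adj (e.symm ⟨a.1, a.2⟩) (e.symm ⟨b.1, b.2⟩) := by
    rintro ⟨a, ha⟩ ⟨b, hb⟩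
    show a ≠ b ∧ ((∃ _ _, _) ∨ (∃ _ _, _)) ↔ _
    constructor
    · rintro ⟨hne, h | h⟩
      · obtain ⟨_, _, h⟩ := h; exact h
      · obtain ⟨_, _, h⟩ := h; exact h.symm
    · intro h
      refine ⟨fun hab => ?_, Or.inl ⟨ha, hb, h⟩⟩
      apply F.adj.irrefl (v := e.symm ⟨a, ha⟩)
      have : (⟨a, ha⟩ : Fin (n+1)) = ⟨b, hb⟩ := by simp [hab]
      rw [this] at h ⊢; exact h
  refine ⟨⟨(iioFinEquiv (n+1)).trans e.symm, ?_⟩, ?_⟩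
  · intro a b
    show F.adj.Adj _ _ ↔ _
    rw [key a b]
    exact Iff.rfl
  · show e.symm ((iioFinEquiv (n+1)) ⟨0, _⟩) = F.root
    have : (iioFinEquiv (n+1)) ⟨0, Nat.succ_pos n⟩ = (0 : Fin (n+1)) := rfl
    rw [this, ← he, Equiv.symm_apply_apply]


lemma union_conn {V : RGraph} {S T : Set V.verts} (hxS : V.root ∈ S) (hxT : V.root ∈ T)
    (hS : (V.adj.induce S).Connected) (hT : (V.adj.induce T).Connected) :
    (V.adj.induce (S ∪ T)).Connected := by
  rw [SimpleGraph.connected_iff]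
  have key : ∀ a : ↥(S ∪ T), (V.adj.induce (S ∪ T)).Reachable a ⟨V.root, Or.inl hxS⟩ := by
    rintro ⟨a, ha | ha⟩
    · have r := hS.preconnected ⟨a, ha⟩ ⟨V.root, hxS⟩
      exact r.map (induceHomOfLE V.adj Set.subset_union_left)
    · have r := hT.preconnected ⟨a, ha⟩ ⟨V.root, hxT⟩
      exact r.map (induceHomOfLE V.adj Set.subset_union_right)
  exact ⟨fun a b => (key a).trans (key b).symm, ⟨⟨V.root, Or.inl hxS⟩⟩⟩

lemma amalg (V F : RGraph) (c : ℕ) (A : ℕ → ℕ → Prop)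
    (h1 : V.HasRCIS (pg c A)) (h2 : V.HasRCIS F) (hF : Finite F.verts) :
    ∃ c' A', c ≤ c' ∧ c' + 1 ≤ c + 1 + Nat.card F.verts ∧
      (∀ a b (ha : a < c+1) (hb : b < c+1) (ha' : a < c'+1) (hb' : b < c'+1),
        ((pg c' A').adj.Adj ⟨a, ha'⟩ ⟨b, hb'⟩ ↔ (pg c A).adj.Adj ⟨a, ha⟩ ⟨b, hb⟩)) ∧
      V.HasRCIS (pg c' A') ∧ (pg c' A').HasRCIS F := by
  classical
  obtain ⟨S, hSr, hScon, e, he⟩ := h1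
  obtain ⟨T, hTr, hTcon, f, hf⟩ := h2
  haveI hSfin : Finite ↥S := Finite.of_equiv _ e.toEquiv.symm
  haveI hTfin : Finite ↥T := Finite.of_equiv _ f.toEquiv.symm
  set D : Set ↥V.verts := T \ S with hD
  set m := Nat.card ↥D with hm
  set c' := c + m with hc'
  have hdisj : Disjoint S D := Set.disjoint_sdiff_right
  have hdisj2 : Disjoint (Set.Iio (c+1) : Set ℕ) (Set.Ico (c+1) (c'+1)) := by
    rw [Set.disjoint_left]; rintro x hx ⟨hx1, hx2⟩
    simp only [Set.mem_Iio] at hx; omega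
  have hcardIco : Nat.card ↥(Set.Ico (c+1) (c'+1) : Set ℕ) = m := by
    rw [Nat.card_coe_set_eq, ← Finset.coe_Ico, Set.ncard_coe_finset, Nat.card_Ico]
    omega
  haveI : Fintype ↥D := Fintype.ofFinite _
  haveI : Fintype ↥(Set.Ico (c+1) (c'+1) : Set ℕ) := (Set.finite_Ico _ _).fintype
  have hcards : Fintype.card ↥D = Fintype.card ↥(Set.Ico (c+1) (c'+1) : Set ℕ) := by
    rw [← Nat.card_eq_fintype_card, ← Nat.card_eq_fintype_card, hcardIco]
  let μ : ↥D ≃ ↥(Set.Ico (c+1) (c'+1) : Set ℕ) := Fintype.equivOfCardEq hcards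
  let νe : ↥S ≃ ↥(Set.Iio (c+1) : Set ℕ) := e.toEquiv
  have hUU : S ∪ D = S ∪ T := Set.union_diff_self
  have hII : Set.Iio (c+1) ∪ Set.Ico (c+1) (c'+1) = Set.Iio (c'+1) :=
    Set.Iio_union_Ico_eq_Iio (by omega)
  set U : Set ↥V.verts := S ∪ D with hU
  let E : ↥U ≃ ↥(Set.Iio (c'+1) : Set ℕ) :=
    (Equiv.Set.union hdisj).trans ((νe.sumCongr μ).trans
      ((Equiv.Set.union hdisj2).symm.trans (Equiv.setCongr hII)))
  have hSU : S ⊆ U := Set.subset_union_left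
  have hTU : T ⊆ U := by rw [hUU]; exact Set.subset_union_right
  have hES : ∀ (x : ↥V.verts) (hx : x ∈ S) (hx' : x ∈ U),
      (E ⟨x, hx'⟩ : ℕ) = (e ⟨x, hx⟩ : ↥(pg c A).verts).1 := by
    intro x hx hx'
    show ((Equiv.setCongr hII) ((Equiv.Set.union hdisj2).symm
      ((νe.sumCongr μ) ((Equiv.Set.union hdisj) ⟨x, hx'⟩))) : ℕ) = _
    rw [Equiv.Set.union_apply_left hdisj hx]
    simp only [Equiv.sumCongr_apply, Sum.map_inl, Equiv.Set.union_symm_apply_left,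
      Equiv.setCongr_apply]
    rfl
  set A' : ℕ → ℕ → Prop := fun a b =>
    ∃ (ha : a < c'+1) (hb : b < c'+1),
      (V.adj.induce U).Adj (E.symm ⟨a, ha⟩) (E.symm ⟨b, hb⟩) with hA'
  have hmemE : ∀ x : ↥U, (E x : ℕ) < c'+1 := fun x => (E x).2
  have hcoe : ∀ (x : ↥U) (h : (E x : ℕ) < c'+1), E.symm ⟨(E x : ℕ), h⟩ = x := by
    intro x h
    have h2 : (⟨(E x : ℕ), h⟩ : ↥(Set.Iio (c'+1) : Set ℕ)) = E x := Subtype.ext rfl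
    rw [h2, Equiv.symm_apply_apply]
  have hadjE : ∀ x y : ↥U,
      (pg c' A').adj.Adj ⟨(E x : ℕ), hmemE x⟩ ⟨(E y : ℕ), hmemE y⟩ ↔ (V.adj.induce U).Adj x y := by
    intro x y
    constructor
    · rintro ⟨hne, h | h⟩
      · obtain ⟨ha, hb, h⟩ := h
        rwa [hcoe, hcoe] at h
      · obtain ⟨ha, hb, h⟩ := h
        rw [hcoe, hcoe] at h
        exact h.symm
    · intro h
      refine ⟨?_, Or.inl ⟨hmemE x, hmemE y, by rw [hcoe, hcoe]; exact h⟩⟩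
      intro hval
      exact h.ne (E.injective (Subtype.ext hval))
  let IsoEG : V.adj.induce U ≃g (pg c' A').adj :=
    { toEquiv := E, map_rel_iff' := fun {x y} => hadjE x y }
  have hrootU : V.root ∈ U := hSU hSr
  have hEroot : (E ⟨V.root, hrootU⟩ : ℕ) = 0 := by
    rw [hES V.root hSr hrootU, he]
    rfl
  refine ⟨c', A', by omega, ?_, ?_, ?_, ?_⟩
  · -- cardinality bound
    have hmT : m ≤ Nat.card ↥T := by
      rw [hm, Nat.card_coe_set_eq, Nat.card_coe_set_eq]
      exact Set.ncard_le_ncard Set.diff_subset (Set.toFinite T)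
    have hTF : Nat.card ↥T = Nat.card F.verts := Nat.card_congr f.toEquiv
    omega
  · -- agreement
    intro a b ha hb ha' hb'
    set xa : ↥S := νe.symm ⟨a, ha⟩ with hxa
    set xb : ↥S := νe.symm ⟨b, hb⟩ with hxb
    have hea : (e xa : ↥(pg c A).verts) = ⟨a, ha⟩ := Equiv.apply_symm_apply νe ⟨a, ha⟩
    have heb : (e xb : ↥(pg c A).verts) = ⟨b, hb⟩ := Equiv.apply_symm_apply νe ⟨b, hb⟩
    have hEa : (E ⟨xa.1, hSU xa.2⟩ : ℕ) = a := by
      rw [hES xa.1 xa.2]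
      show (e xa : ↥(pg c A).verts).1 = a
      rw [hea]
    have hEb : (E ⟨xb.1, hSU xb.2⟩ : ℕ) = b := by
      rw [hES xb.1 xb.2]
      show (e xb : ↥(pg c A).verts).1 = b
      rw [heb]
    have e1 : (⟨a, ha'⟩ : ↥(pg c' A').verts) = ⟨(E ⟨xa.1, hSU xa.2⟩ : ℕ), hmemE _⟩ :=
      Subtype.ext hEa.symm
    have e2 : (⟨b, hb'⟩ : ↥(pg c' A').verts) = ⟨(E ⟨xb.1, hSU xb.2⟩ : ℕ), hmemE _⟩ :=
      Subtype.ext hEb.symm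
    show (pg c' A').adj.Adj ⟨a, ha'⟩ ⟨b, hb'⟩ ↔ _
    rw [e1, e2, hadjE]
    have h3 : (V.adj.induce U).Adj ⟨xa.1, hSU xa.2⟩ ⟨xb.1, hSU xb.2⟩ ↔
        (V.adj.induce S).Adj xa xb := Iff.rfl
    rw [h3, ← e.map_rel_iff, hea, heb]
  · -- V.HasRCIS (pg c' A')
    refine ⟨U, hrootU, ?_, IsoEG, Subtype.ext hEroot⟩
    show (SimpleGraph.induce (S ∪ (T \ S)) V.adj).Connected
    rw [Set.union_diff_self]
    exact union_conn hSr hTr hScon hTcon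
  · -- (pg c' A').HasRCIS F
    set TU : Set ↥U := {x | x.1 ∈ T} with hTUdef
    have iso1 := isoInduce IsoEG.symm TU
    let iso2 : (V.adj.induce U).induce TU ≃g V.adj.induce T :=
      { toEquiv :=
        { toFun := fun x => ⟨x.1.1, x.2⟩
          invFun := fun y => ⟨⟨y.1, hTU y.2⟩, y.2⟩
          left_inv := by intro x; apply Subtype.ext; apply Subtype.ext; rfl
          right_inv := by intro y; apply Subtype.ext; rfl }
        map_rel_iff' := Iff.rfl }
    have hsymmroot : E.symm ⟨0, Nat.succ_pos c'⟩ = ⟨V.root, hrootU⟩ := by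
      have h9 : (⟨0, Nat.succ_pos c'⟩ : ↥(Set.Iio (c'+1) : Set ℕ)) = E ⟨V.root, hrootU⟩ :=
        Subtype.ext hEroot.symm
      rw [h9, Equiv.symm_apply_apply]
    have hmemroot : (pg c' A').root ∈ (⇑IsoEG.symm ⁻¹' TU : Set ↥(pg c' A').verts) := by
      show (E.symm ⟨0, Nat.succ_pos c'⟩ : ↥U).1 ∈ T
      rw [hsymmroot]
      exact hTr
    refine ⟨⇑IsoEG.symm ⁻¹' TU, hmemroot, ?_, (isoInduce IsoEG.symm TU).trans (iso2.trans f), ?_⟩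
    · exact conn_of_iso ((isoInduce IsoEG.symm TU).trans iso2).symm hTcon
    · show f (iso2 ((isoInduce IsoEG.symm TU) ⟨(pg c' A').root, hmemroot⟩)) = F.root
      have s2 : iso2 ((isoInduce IsoEG.symm TU) ⟨(pg c' A').root, hmemroot⟩) = ⟨V.root, hTr⟩ := by
        apply Subtype.ext
        show (E.symm ⟨0, Nat.succ_pos c'⟩ : ↥U).1 = _
        rw [hsymmroot]
      rw [s2, hf]

open RGraph

structure StL where
  c : ℕ
  A : ℕ → ℕ → Prop
  j : ℕ

variable (v : ℕ → RGraph) (f : ℕ → CanG)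

def StInv (k : ℕ) (s : StL) : Prop := s.c ≤ k ∧ (v (k+1)).HasRCIS (pg s.c s.A)

def NextR (k : ℕ) (s t : StL) : Prop :=
  s.c ≤ t.c ∧
  (∀ a b (ha : a < s.c+1) (hb : b < s.c+1) (ha' : a < t.c+1) (hb' : b < t.c+1),
    ((pg t.c t.A).adj.Adj ⟨a, ha'⟩ ⟨b, hb'⟩ ↔ (pg s.c s.A).adj.Adj ⟨a, ha⟩ ⟨b, hb⟩)) ∧
  ((t.j = s.j ∧ t.c = s.c ∧ t.A = s.A ∧ ¬ (s.c + 1 + sz (f s.j) ≤ k + 2)) ∨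
   (t.j = s.j + 1 ∧ sz (f s.j) ≤ k + 2 ∧
     ((v (k+2)).HasRCIS (toCan (f s.j)) → (pg t.c t.A).HasRCIS (toCan (f s.j)))))

lemma step_ex (hv : ∀ j k k', j ≤ k → j ≤ k' → RGraph.simUpTo j (v k) (v k'))
    (k : ℕ) (s : StL) (h : StInv v k s) :
    ∃ t : StL, StInv v (k+1) t ∧ NextR v f k s t := by
  obtain ⟨hsc, hsR⟩ := h
  have htrans : (v (k+2)).HasRCIS (pg s.c s.A) :=
    (hv (s.c+1) (k+1) (k+2) (by omega) (by omega) (pg s.c s.A) (pg_finite _ _)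
      (by rw [pg_card])).mp hsR
  by_cases hfit : s.c + 1 + sz (f s.j) ≤ k + 2
  · by_cases hhas : (v (k+2)).HasRCIS (toCan (f s.j))
    · obtain ⟨c', A', hcc, hbound, hagree, hrcis, hhasF⟩ :=
        amalg (v (k+2)) (toCan (f s.j)) s.c s.A htrans hhas (toCan_finite _)
      rw [toCan_card] at hbound
      exact ⟨⟨c', A', s.j+1⟩, ⟨show c' ≤ k + 1 by omega, hrcis⟩, hcc, hagree,
        Or.inr ⟨rfl, by omega, fun _ => hhasF⟩⟩
    · exact ⟨⟨s.c, s.A, s.j+1⟩, ⟨show s.c ≤ k + 1 by omega, htrans⟩, le_refl _,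
        fun a b ha hb ha' hb' => Iff.rfl,
        Or.inr ⟨rfl, by omega, fun h' => absurd h' hhas⟩⟩
  · exact ⟨⟨s.c, s.A, s.j⟩, ⟨show s.c ≤ k + 1 by omega, htrans⟩, le_refl _,
      fun a b ha hb ha' hb' => Iff.rfl, Or.inl ⟨rfl, rfl, rfl, hfit⟩⟩

lemma base_inv : StInv v 0 ⟨0, fun _ _ => False, 0⟩ := by
  refine ⟨le_refl 0, {(v 1).root}, rfl, ?_, ?_⟩
  · rw [SimpleGraph.connected_iff]
    refine ⟨fun a b => ?_, ⟨⟨(v 1).root, rfl⟩⟩⟩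
    have hab : a = b := Subtype.ext (a.2.trans b.2.symm)
    rw [hab]
  · refine ⟨⟨⟨fun _ => ⟨0, Nat.succ_pos 0⟩, fun _ => ⟨(v 1).root, rfl⟩,
      fun a => Subtype.ext a.2.symm, fun b => Subtype.ext (Nat.lt_one_iff.mp b.2).symm⟩, ?_⟩, rfl⟩
    intro a b
    constructor
    · rintro ⟨-, hF | hF⟩ <;> exact hF.elim
    · intro h
      exfalso
      have hab : a = b := Subtype.ext (a.2.trans b.2.symm)
      rw [hab] at h
      exact h.ne rfl

noncomputable def stage (hv : ∀ j k k', j ≤ k → j ≤ k' → RGraph.simUpTo j (v k) (v k')) :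
    (k : ℕ) → {s : StL // StInv v k s} := fun k =>
  Nat.rec ⟨⟨0, fun _ _ => False, 0⟩, base_inv v⟩
    (fun k ih => ⟨(step_ex v f hv k ih.1 ih.2).choose,
      (step_ex v f hv k ih.1 ih.2).choose_spec.1⟩) k

lemma stage_next (hv : ∀ j k k', j ≤ k → j ≤ k' → RGraph.simUpTo j (v k) (v k')) (k : ℕ) :
    NextR v f k (stage v f hv k).1 (stage v f hv (k+1)).1 :=
  (step_ex v f hv k (stage v f hv k).1 (stage v f hv k).2).choose_spec.2


variable (hv : ∀ j k k', j ≤ k → j ≤ k' → RGraph.simUpTo j (v k) (v k'))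

noncomputable def cst (k : ℕ) : ℕ := (stage v f hv k).1.c
noncomputable def Ast (k : ℕ) : ℕ → ℕ → Prop := (stage v f hv k).1.A
noncomputable def jst (k : ℕ) : ℕ := (stage v f hv k).1.j
noncomputable def pgk (k : ℕ) : RGraph := pg (cst v f hv k) (Ast v f hv k)

lemma pgk_rcis (k : ℕ) : (v (k+1)).HasRCIS (pgk v f hv k) := (stage v f hv k).2.2
lemma cst_le (k : ℕ) : cst v f hv k ≤ k := (stage v f hv k).2.1
lemma cst_mono : Monotone (cst v f hv) :=
  monotone_nat_of_le_succ fun k => (stage_next v f hv k).1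

lemma agree {k k' : ℕ} (h : k ≤ k') : ∀ a b (ha : a < cst v f hv k+1)
    (hb : b < cst v f hv k+1) (ha' : a < cst v f hv k'+1) (hb' : b < cst v f hv k'+1),
    ((pgk v f hv k').adj.Adj ⟨a, ha'⟩ ⟨b, hb'⟩ ↔ (pgk v f hv k).adj.Adj ⟨a, ha⟩ ⟨b, hb⟩) := by
  induction k', h using Nat.le_induction with
  | base => intro a b ha hb ha' hb'; exact Iff.rfl
  | succ n hn ih =>
    intro a b ha hb ha' hb'
    have hm := cst_mono v f hv hn
    have h1 : a < cst v f hv n + 1 := by omega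
    have h2 : b < cst v f hv n + 1 := by omega
    exact ((stage_next v f hv n).2.1 a b h1 h2 ha' hb').trans (ih a b ha hb h1 h2)

lemma jst_step (k : ℕ) :
    jst v f hv (k+1) = jst v f hv k ∨ jst v f hv (k+1) = jst v f hv k + 1 := by
  rcases (stage_next v f hv k).2.2 with h | h
  · exact Or.inl h.1
  · exact Or.inr h.1

lemma jst_mono : Monotone (jst v f hv) :=
  monotone_nat_of_le_succ fun k => by rcases jst_step v f hv k with h | h <;> omega

lemma jst_incr (k : ℕ) : ∃ k', k ≤ k' ∧ jst v f hv (k'+1) = jst v f hv k' + 1 := by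
  by_contra hcon
  push_neg at hcon
  have hsame : ∀ d, jst v f hv (k+d) = jst v f hv k ∧ cst v f hv (k+d) = cst v f hv k := by
    intro d
    induction d with
    | zero => exact ⟨rfl, rfl⟩
    | succ d ih =>
      have hno := hcon (k+d) (by omega)
      rcases (stage_next v f hv (k+d)).2.2 with h | h
      · exact ⟨h.1.trans ih.1, h.2.1.trans ih.2⟩
      · exact absurd h.1 hno
  set d := cst v f hv k + sz (f (jst v f hv k)) with hd
  rcases (stage_next v f hv (k+d)).2.2 with h | h
  · have hnofit := h.2.2.2
    have e1 : (stage v f hv (k+d)).1.c = cst v f hv (k+d) := rfl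
    have e2 : (stage v f hv (k+d)).1.j = jst v f hv (k+d) := rfl
    rw [e1, e2, (hsame d).1, (hsame d).2] at hnofit
    omega
  · exact absurd h.1 (hcon (k+d) (by omega))

lemma jst_unbounded (i : ℕ) : ∃ k, i < jst v f hv k := by
  induction i with
  | zero =>
    obtain ⟨k', _, hstep⟩ := jst_incr v f hv 0
    exact ⟨k'+1, by omega⟩
  | succ i ih =>
    obtain ⟨k, hk⟩ := ih
    obtain ⟨k', hkk', hstep⟩ := jst_incr v f hv k
    have := jst_mono v f hv hkk'
    exact ⟨k'+1, by omega⟩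

lemma jst_hit (i : ℕ) : ∃ k, jst v f hv k = i ∧ jst v f hv (k+1) = i + 1 := by
  classical
  obtain ⟨K, hK⟩ := jst_unbounded v f hv i
  have hex : ∃ k, i < jst v f hv k := ⟨K, hK⟩
  have hk0 : i < jst v f hv (Nat.find hex) := Nat.find_spec hex
  have hzero : jst v f hv 0 = 0 := rfl
  have hk0pos : Nat.find hex ≠ 0 := by
    intro h
    rw [h, hzero] at hk0
    omega
  obtain ⟨k1, hk1e⟩ : ∃ k1, Nat.find hex = k1 + 1 := ⟨Nat.find hex - 1, by omega⟩
  have hlt : ¬ i < jst v f hv k1 := Nat.find_min hex (by omega)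
  rw [hk1e] at hk0
  rcases jst_step v f hv k1 with h | h
  · omega
  · exact ⟨k1, by omega, by omega⟩

lemma item_processed (i : ℕ) : ∃ k, sz (f i) ≤ k + 2 ∧
    ((v (k+2)).HasRCIS (toCan (f i)) → (pgk v f hv (k+1)).HasRCIS (toCan (f i))) := by
  obtain ⟨k, hk, hk1⟩ := jst_hit v f hv i
  rcases (stage_next v f hv k).2.2 with h | h
  · exfalso
    have : jst v f hv (k+1) = jst v f hv k := h.1
    omega
  · rw [show (stage v f hv k).1.j = i from hk] at h
    exact ⟨k, h.2.1, h.2.2⟩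

noncomputable def LG : RGraph where
  verts := {a : ℕ | ∃ k, a < cst v f hv k + 1}
  adj :=
    { Adj := fun a b => a.1 ≠ b.1 ∧ ∃ k, ∃ (ha : a.1 < cst v f hv k + 1)
        (hb : b.1 < cst v f hv k + 1), (pgk v f hv k).adj.Adj ⟨a.1, ha⟩ ⟨b.1, hb⟩
      symm := ⟨by
        rintro a b ⟨h1, k, ha, hb, h⟩
        exact ⟨Ne.symm h1, k, hb, ha, h.symm⟩⟩
      loopless := ⟨fun a h => h.1 rfl⟩ }
  root := ⟨0, 0, Nat.succ_pos _⟩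

lemma LG_mem (k : ℕ) (a : ℕ) (h : a < cst v f hv k + 1) : a ∈ (LG v f hv).verts := ⟨k, h⟩

lemma LG_adj_iff (k : ℕ) (x y : (LG v f hv).verts) (hx : x.1 < cst v f hv k + 1)
    (hy : y.1 < cst v f hv k + 1) :
    (LG v f hv).adj.Adj x y ↔ (pgk v f hv k).adj.Adj ⟨x.1, hx⟩ ⟨y.1, hy⟩ := by
  constructor
  · rintro ⟨hne, k', ha2, hb2, h⟩
    have hm1 := cst_mono v f hv (le_max_left k k')
    have hm2 := cst_mono v f hv (le_max_right k k')
    have h1 : x.1 < cst v f hv (max k k') + 1 := by omega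
    have h2 : y.1 < cst v f hv (max k k') + 1 := by omega
    exact (agree v f hv (le_max_left k k') x.1 y.1 hx hy h1 h2).mp
      ((agree v f hv (le_max_right k k') x.1 y.1 ha2 hb2 h1 h2).mpr h)
  · intro h
    exact ⟨fun hxy => h.ne (Subtype.ext hxy), k, hx, hy, h⟩

lemma LG_conn : (LG v f hv).adj.Connected := by
  rw [SimpleGraph.connected_iff]
  have key : ∀ x : ↥(LG v f hv).verts, (LG v f hv).adj.Reachable x (LG v f hv).root := by
    rintro ⟨a, k, ha⟩
    have hconn : (pgk v f hv k).adj.Connected := hasRCIS_connected (pgk_rcis v f hv k)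
    have r := hconn.preconnected ⟨a, ha⟩ (pgk v f hv k).root
    let φ : (pgk v f hv k).adj →g (LG v f hv).adj :=
      { toFun := fun z => ⟨z.1, LG_mem v f hv k z.1 z.2⟩
        map_rel' := by
          intro z w h
          exact (LG_adj_iff v f hv k ⟨z.1, LG_mem v f hv k z.1 z.2⟩
            ⟨w.1, LG_mem v f hv k w.1 w.2⟩ z.2 w.2).mpr h }
    exact r.map φ
  exact ⟨fun x y => (key x).trans (key y).symm, ⟨(LG v f hv).root⟩⟩

lemma LG_has_pgk (k : ℕ) : (LG v f hv).HasRCIS (pgk v f hv k) := by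
  let S : Set ↥(LG v f hv).verts := {x | x.1 < cst v f hv k + 1}
  have hroot : (LG v f hv).root ∈ S := Nat.succ_pos _
  let eL : (LG v f hv).adj.induce S ≃g (pgk v f hv k).adj :=
    { toEquiv :=
      { toFun := fun x => ⟨x.1.1, x.2⟩
        invFun := fun y => ⟨⟨y.1, LG_mem v f hv k y.1 y.2⟩, y.2⟩
        left_inv := fun x => Subtype.ext (Subtype.ext rfl)
        right_inv := fun y => Subtype.ext rfl }
      map_rel_iff' := by
        intro x y
        exact (LG_adj_iff v f hv k x.1 y.1 x.2 y.2).symm }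
  exact ⟨S, hroot, conn_of_iso eL.symm (hasRCIS_connected (pgk_rcis v f hv k)), eL, rfl⟩

lemma LG_to_v (m : ℕ) (F : RGraph) (hF : Finite F.verts) (hcard : Nat.card F.verts ≤ m)
    (h : (LG v f hv).HasRCIS F) : (v m).HasRCIS F := by
  classical
  obtain ⟨S, hroot, hconn, e, he⟩ := h
  haveI hSfin : Finite ↥S := Finite.of_equiv _ e.toEquiv.symm
  have hbd : ∃ K, ∀ x : ↥S, (x : ↥(LG v f hv).verts).1 < cst v f hv K + 1 := by
    have hg : ∀ x : ↥S, ∃ k, (x : ↥(LG v f hv).verts).1 < cst v f hv k + 1 :=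
      fun x => x.1.2
    choose g hgs using hg
    obtain ⟨K, hK⟩ := Finite.exists_le g
    exact ⟨K, fun x => lt_of_lt_of_le (hgs x) (by have := cst_mono v f hv (hK x); omega)⟩
  obtain ⟨K, hK⟩ := hbd
  have hKk : ∀ x : ↥S, (x : ↥(LG v f hv).verts).1 < cst v f hv (K + m) + 1 := by
    intro x
    have h1 := cst_mono v f hv (Nat.le_add_right K m)
    have h2 := hK x
    omega
  set k := K + m with hk
  let S' : Set ↥(pgk v f hv k).verts :=
    {y | ∃ hx : y.1 ∈ (LG v f hv).verts, (⟨y.1, hx⟩ : ↥(LG v f hv).verts) ∈ S}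
  let ψ : ↥S' ≃ ↥S :=
    { toFun := fun y => ⟨⟨y.1.1, y.2.choose⟩, y.2.choose_spec⟩
      invFun := fun x => ⟨⟨x.1.1, hKk x⟩, ⟨x.1.2, by
        convert x.2 using 2⟩⟩
      left_inv := fun y => Subtype.ext (Subtype.ext rfl)
      right_inv := fun x => Subtype.ext (Subtype.ext rfl) }
  let iso : (pgk v f hv k).adj.induce S' ≃g (LG v f hv).adj.induce S :=
    { toEquiv := ψ
      map_rel_iff' := by
        intro y z
        show (LG v f hv).adj.Adj _ _ ↔ (pgk v f hv k).adj.Adj y.1 z.1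
        exact (LG_adj_iff v f hv k _ _ (show (y.1 : ↥(pgk v f hv k).verts).1 < cst v f hv k + 1 from y.1.2)
          (show (z.1 : ↥(pgk v f hv k).verts).1 < cst v f hv k + 1 from z.1.2))
    }
  have hroot' : (pgk v f hv k).root ∈ S' := by
    refine ⟨(LG v f hv).root.2, ?_⟩
    exact hroot
  have h2 : (pgk v f hv k).HasRCIS F := by
    refine ⟨S', hroot', conn_of_iso iso.symm hconn, iso.trans e, ?_⟩
    show e (iso ⟨(pgk v f hv k).root, hroot'⟩) = F.root
    have : iso ⟨(pgk v f hv k).root, hroot'⟩ = ⟨(LG v f hv).root, hroot⟩ :=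
      Subtype.ext (Subtype.ext rfl)
    rw [this, he]
  have h3 : (v (k+1)).HasRCIS F := hasRCIS_trans (pgk_rcis v f hv k) h2
  exact (hv m (k+1) m (by omega) (le_refl m) F hF hcard).mp h3

lemma v_to_LG (hsurj : Function.Surjective f) (m : ℕ) (F : RGraph) (hF : Finite F.verts)
    (hcard : Nat.card F.verts ≤ m) (h : (v m).HasRCIS F) : (LG v f hv).HasRCIS F := by
  obtain ⟨p, hp, hiso⟩ := exists_can F hF
  have hFp : (v m).HasRCIS (toCan p) := (hasRCIS_congr_right hiso).mpr h
  have hpers : ∀ jj, sz p ≤ jj → (v jj).HasRCIS (toCan p) := fun jj hjj =>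
    (hv (sz p) m jj (by omega) hjj (toCan p) (toCan_finite p) (le_of_eq (toCan_card p))).mp hFp
  obtain ⟨i, hi⟩ := hsurj p
  obtain ⟨k, hszk, himp⟩ := item_processed v f hv i
  rw [hi] at hszk himp
  have h1 : (pgk v f hv (k+1)).HasRCIS (toCan p) := himp (hpers (k+2) (by omega))
  have h2 : (LG v f hv).HasRCIS (toCan p) := hasRCIS_trans (LG_has_pgk v f hv (k+1)) h1
  exact (hasRCIS_congr_right hiso).mp h2
end CG


/-- Countable connected rooted graph. -/
def CRGraph := {R : RGraph // R.adj.Connected}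

noncomputable def dC (A B : CRGraph) : ℝ≥0∞ := RGraph.dR A.1 B.1

/-- The (quotient of the) space of countable connected rooted graphs with the
similarity pseudometric is complete: every Cauchy sequence converges. -/
theorem complete_CRGraph (u : ℕ → CRGraph)
    (hu : ∀ ε : ℝ≥0∞, 0 < ε → ∃ N : ℕ, ∀ m ≥ N, ∀ n ≥ N, dC (u m) (u n) < ε) :
    ∃ L : CRGraph, ∀ ε : ℝ≥0∞, 0 < ε → ∃ N : ℕ, ∀ n ≥ N, dC (u n) L < ε := by
  classical
  have hN : ∀ k : ℕ, ∃ N, ∀ m, N ≤ m → ∀ n, N ≤ n → RGraph.simUpTo k (u m).1 (u n).1 := by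
    intro k
    have hne : ((k:ℝ≥0∞)+1) ≠ ⊤ :=
      ENNReal.add_ne_top.mpr ⟨ENNReal.natCast_ne_top k, ENNReal.one_ne_top⟩
    have hpos : (0:ℝ≥0∞) < ((k:ℝ≥0∞)+1)⁻¹ := ENNReal.inv_pos.mpr hne
    obtain ⟨N, hNs⟩ := hu _ hpos
    refine ⟨N, fun m hm n hn => ?_⟩
    have hd : (sSup {x : ℝ≥0∞ | ∃ r : ℕ, x = (r:ℝ≥0∞) ∧
        RGraph.simUpTo r (u m).1 (u n).1})⁻¹ < ((k:ℝ≥0∞)+1)⁻¹ := hNs m hm n hn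
    have hlt := ENNReal.inv_lt_inv.mp hd
    obtain ⟨x, hxmem, hgt⟩ := lt_sSup_iff.mp hlt
    obtain ⟨r, rfl, hsim⟩ := hxmem
    have hkr : k ≤ r := by
      by_contra hc
      push_neg at hc
      have hcast : ((r:ℕ):ℝ≥0∞) < ((k:ℝ≥0∞)) + 1 := by
        have : ((r:ℕ):ℝ≥0∞) < ((k:ℕ):ℝ≥0∞) := by exact_mod_cast hc
        exact lt_of_lt_of_le this le_self_add
      exact absurd hgt (not_lt.mpr hcast.le)
    exact CG.simUpTo_mono hkr hsim
  choose N hNs using hN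
  set M : ℕ → ℕ := fun k => (Finset.range (k+1)).sup N with hM
  have hMN : ∀ k, N k ≤ M k := fun k => Finset.le_sup (Finset.self_mem_range_succ k)
  have hMmono : Monotone M := fun a b hab =>
    Finset.sup_mono (by intro x hx; simp only [Finset.mem_range] at hx ⊢; omega)
  set v : ℕ → RGraph := fun k => (u (M k)).1 with hvdef
  have hv : ∀ j k k', j ≤ k → j ≤ k' → RGraph.simUpTo j (v k) (v k') := by
    intro j k k' hjk hjk'
    exact hNs j (M k) (le_trans (hMN j) (hMmono hjk)) (M k') (le_trans (hMN j) (hMmono hjk'))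
  obtain ⟨f, hf⟩ := CG.canG_countable
  refine ⟨⟨CG.LG v f hv, CG.LG_conn v f hv⟩, ?_⟩
  intro ε hε
  obtain ⟨m0, hm0⟩ := ENNReal.exists_inv_nat_lt hε.ne'
  refine ⟨M m0, fun n hn => ?_⟩
  have hsim : RGraph.simUpTo m0 (u n).1 (CG.LG v f hv) := by
    intro F hF hc
    have h1 : (u n).1.HasRCIS F ↔ (v m0).HasRCIS F :=
      hNs m0 n (le_trans (hMN m0) hn) (M m0) (hMN m0) F hF hc
    have h2 : (v m0).HasRCIS F ↔ (CG.LG v f hv).HasRCIS F :=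
      ⟨fun h => CG.v_to_LG v f hv hf m0 F hF hc h, fun h => CG.LG_to_v v f hv m0 F hF hc h⟩
    exact h1.trans h2
  have hmem : ((m0 : ℕ):ℝ≥0∞) ∈ {x : ℝ≥0∞ | ∃ r : ℕ, x = (r:ℝ≥0∞) ∧
      RGraph.simUpTo r (u n).1 (CG.LG v f hv)} := ⟨m0, rfl, hsim⟩
  have hle : ((m0 : ℕ):ℝ≥0∞) ≤ sSup {x : ℝ≥0∞ | ∃ r : ℕ, x = (r:ℝ≥0∞) ∧
      RGraph.simUpTo r (u n).1 (CG.LG v f hv)} := le_sSup hmem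
  have hfinal : dC (u n) ⟨CG.LG v f hv, CG.LG_conn v f hv⟩ ≤ ((m0 : ℕ):ℝ≥0∞)⁻¹ :=
    ENNReal.inv_le_inv.mpr hle
  exact lt_of_le_of_lt hfinal hm0
end

section
/- The quotient metric space (𝔾*, d) of countable connected rooted graphs modulo d = 0 is compact. -/
open scoped ENNReal

namespace RGraph

lemma Iso.symm' {A B : RGraph} (h : A.Iso B) : B.Iso A := by
  obtain ⟨e, he⟩ := h
  refine ⟨e.symm, ?_⟩
  rw [← he]
  exact e.symm_apply_apply A.root

lemma HasRCIS.congr {A F F' : RGraph} (h : A.HasRCIS F) (hFF' : F.Iso F') :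
    A.HasRCIS F' := by
  obtain ⟨S, hr, hc, e, he⟩ := h
  obtain ⟨e', he'⟩ := hFF'
  refine ⟨S, hr, hc, e.trans e', ?_⟩
  show e' (e ⟨A.root, hr⟩) = F'.root
  rw [he, he']

/-- restriction of an iso to an induced subgraph -/
noncomputable def isoInduceImage {V W : Type*} {G : SimpleGraph V} {H : SimpleGraph W}
    (e : G ≃g H) (s : Set V) : G.induce s ≃g H.induce (⇑e '' s) where
  toFun := fun x => ⟨e x, x, x.2, rfl⟩
  invFun := fun y => ⟨e.symm y, by
    obtain ⟨x, hx, hxy⟩ := y.2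
    have : (e.symm y : V) = x := by rw [← hxy]; exact e.toEquiv.symm_apply_apply x
    rw [this]; exact hx⟩
  left_inv := fun x => Subtype.ext (e.toEquiv.symm_apply_apply x)
  right_inv := fun y => Subtype.ext (e.toEquiv.apply_symm_apply y)
  map_rel_iff' := by
    intro a b
    exact e.map_adj_iff

/-- induce of induce -/
noncomputable def isoInduceInduce {V : Type*} (G : SimpleGraph V) (s : Set V) (t : Set ↥s) :
    (G.induce s).induce t ≃g G.induce ((↑) '' t : Set V) where
  toFun := fun x => ⟨((x : ↥s) : V), ⟨(x : ↥s), x.2, rfl⟩⟩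
  invFun := fun y => by
    refine ⟨⟨(y : V), ?_⟩, ?_⟩
    · obtain ⟨x, hx, hxy⟩ := y.2; exact hxy ▸ x.2
    · obtain ⟨x, hx, hxy⟩ := y.2
      have : x = ⟨(y : V), hxy ▸ x.2⟩ := Subtype.ext hxy
      exact this ▸ hx
  left_inv := fun x => by ext; rfl
  right_inv := fun y => by ext; rfl
  map_rel_iff' := by intro a b; rfl

/-- transport along equality of vertex sets -/
def isoOfSetEq {V : Type*} (G : SimpleGraph V) {s t : Set V} (h : s = t) :
    G.induce s ≃g G.induce t where
  toFun x := ⟨x, h ▸ x.2⟩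
  invFun y := ⟨y, h.symm ▸ y.2⟩
  left_inv x := rfl
  right_inv y := rfl
  map_rel_iff' := Iff.rfl

@[simp] lemma isoInduceImage_apply_val {V W : Type*} {G : SimpleGraph V} {H : SimpleGraph W}
    (e : G ≃g H) (s : Set V) (x : ↥s) :
    ((isoInduceImage e s) x : W) = e x := rfl

@[simp] lemma isoInduceImage_symm_apply_val {V W : Type*} {G : SimpleGraph V} {H : SimpleGraph W}
    (e : G ≃g H) (s : Set V) (y : ↥(⇑e '' s)) :
    (((isoInduceImage e s).symm y : ↥s) : V) = e.symm ↑y := rfl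

@[simp] lemma isoInduceInduce_apply_val {V : Type*} (G : SimpleGraph V) (s : Set V) (t : Set ↥s)
    (x : ↥t) : ((isoInduceInduce G s t) x : V) = ((x : ↥s) : V) := rfl

@[simp] lemma isoInduceInduce_symm_apply_val {V : Type*} (G : SimpleGraph V) (s : Set V)
    (t : Set ↥s) (y : ↥((↑) '' t : Set V)) :
    ((((isoInduceInduce G s t).symm y : ↥t) : ↥s) : V) = (y : V) := rfl

@[simp] lemma isoOfSetEq_apply_val {V : Type*} (G : SimpleGraph V) {s t : Set V} (h : s = t)
    (x : ↥s) : ((isoOfSetEq G h) x : V) = x := rfl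

/-- The code graph: vertex set `{0,...,k}`, root `0`. -/
def cg (k : ℕ) (f : ℕ → ℕ → Bool) : RGraph where
  verts := Set.Iio (k+1)
  adj :=
    { Adj := fun a b => a ≠ b ∧ (f a b ∨ f b a)
      symm := ⟨fun a b h => ⟨h.1.symm, h.2.symm⟩⟩
      loopless := ⟨fun a h => h.1 rfl⟩ }
  root := ⟨0, Nat.succ_pos k⟩

lemma cg_adj {k f} (a b : ↥(cg k f).verts) :
    (cg k f).adj.Adj a b ↔ a ≠ b ∧ (f ↑a ↑b ∨ f ↑b ↑a) := Iff.rfl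

instance cg_finite (k f) : Finite (cg k f).verts := by
  have : (Set.Iio (k+1)).Finite := Set.finite_Iio _
  exact this.to_subtype

lemma card_Iio_nat (n : ℕ) : Nat.card (Set.Iio n) = n := by
  rw [Nat.card_coe_set_eq, ← Finset.coe_Iio, Set.ncard_coe_finset, Nat.card_Iio]

lemma cg_card (k f) : Nat.card (cg k f).verts = k + 1 := card_Iio_nat (k+1)

lemma iso_cg_of_eqOn {k : ℕ} {f f' : ℕ → ℕ → Bool}
    (h : ∀ a b, a < k+1 → b < k+1 → f a b = f' a b) : (cg k f).Iso (cg k f') := by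
  refine ⟨{ toEquiv := Equiv.refl _, map_rel_iff' := ?_ }, rfl⟩
  intro a b
  show (a ≠ b ∧ (f' ↑a ↑b ∨ f' ↑b ↑a)) ↔ (a ≠ b ∧ (f ↑a ↑b ∨ f ↑b ↑a))
  rw [h ↑a ↑b a.2 b.2, h ↑b ↑a b.2 a.2]

lemma exists_code_iso (F : RGraph) (hF : Finite F.verts) :
    ∃ k f, k + 1 = Nat.card F.verts ∧ F.Iso (cg k f) := by
  classical
  have hne : Nonempty F.verts := ⟨F.root⟩
  have hpos : 0 < Nat.card F.verts := Nat.card_pos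
  obtain ⟨k, hk⟩ : ∃ k, k + 1 = Nat.card F.verts := ⟨Nat.card F.verts - 1, by omega⟩
  have e0 : F.verts ≃ Fin (k+1) := (Finite.equivFin F.verts).trans (finCongr hk.symm)
  let e1 : F.verts ≃ Fin (k+1) := e0.trans (Equiv.swap (e0 F.root) 0)
  have he1 : e1 F.root = 0 := by simp [e1, Equiv.swap_apply_left]
  let e2 : Fin (k+1) ≃ ↥(Set.Iio (k+1)) :=
    { toFun := fun x => ⟨x, x.isLt⟩
      invFun := fun y => ⟨y, y.2⟩
      left_inv := fun x => rfl
      right_inv := fun y => rfl }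
  let ψ : F.verts ≃ ↥(Set.Iio (k+1)) := e1.trans e2
  have hψroot : (ψ F.root : ℕ) = 0 := by
    show ((e2 (e1 F.root)) : ℕ) = 0
    rw [he1]; rfl
  set f : ℕ → ℕ → Bool := fun a b =>
    decide (∃ (ha : a ∈ Set.Iio (k+1)) (hb : b ∈ Set.Iio (k+1)),
      F.adj.Adj (ψ.symm ⟨a, ha⟩) (ψ.symm ⟨b, hb⟩)) with hfdef
  have key : ∀ x y : F.verts, (f ↑(ψ x) ↑(ψ y) = true) ↔ F.adj.Adj x y := by
    intro x y
    rw [hfdef, decide_eq_true_iff]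
    constructor
    · rintro ⟨ha, hb, h⟩
      simpa using h
    · intro h
      exact ⟨(ψ x).2, (ψ y).2, by simpa using h⟩
  refine ⟨k, f, hk, ⟨{ toEquiv := ψ, map_rel_iff' := ?_ }, ?_⟩⟩
  · intro a b
    show (ψ a ≠ ψ b ∧ (f ↑(ψ a) ↑(ψ b) ∨ f ↑(ψ b) ↑(ψ a))) ↔ F.adj.Adj a b
    constructor
    · rintro ⟨hne', hor | hor⟩
      · exact (key a b).1 hor
      · exact ((key b a).1 hor).symm
    · intro h
      exact ⟨fun heq => F.adj.ne_of_adj h (ψ.injective heq), Or.inl ((key a b).2 h)⟩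
  · show ψ F.root = (cg k f).root
    exact Subtype.ext hψroot

lemma hasRCIS_cg_zero (A : RGraph) (f : ℕ → ℕ → Bool) : A.HasRCIS (cg 0 f) := by
  have hmem : A.root ∈ ({A.root} : Set ↥A.verts) := rfl
  have hsub : ∀ x : ↥({A.root} : Set ↥A.verts), x = ⟨A.root, hmem⟩ :=
    fun x => Subtype.ext x.2
  have hsub' : ∀ x : ↥(cg 0 f).verts, x = (cg 0 f).root := by
    intro x
    exact Subtype.ext (Nat.lt_one_iff.mp x.2)
  have hconn : (A.adj.induce ({A.root} : Set ↥A.verts)).Connected := by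
    rw [SimpleGraph.connected_iff]
    refine ⟨fun a b => ?_, ⟨⟨A.root, hmem⟩⟩⟩
    rw [hsub a, hsub b]
  refine ⟨{A.root}, hmem, hconn, ?_⟩
  refine ⟨{ toEquiv :=
    { toFun := fun _ => (cg 0 f).root
      invFun := fun _ => ⟨A.root, hmem⟩
      left_inv := fun x => (hsub x).symm
      right_inv := fun y => (hsub' y).symm }, map_rel_iff' := ?_ }, rfl⟩
  intro a b
  constructor
  · rintro ⟨hne, -⟩
    exact absurd rfl hne
  · intro h
    rw [hsub a, hsub b] at h
    exact absurd h (A.adj.loopless.irrefl _)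

lemma hasRCIS_trans {A M F : RGraph} (h1 : A.HasRCIS M) (h2 : M.HasRCIS F) :
    A.HasRCIS F := by
  obtain ⟨S, hrS, hcS, e, he⟩ := h1
  obtain ⟨T, hrT, hcT, e', he'⟩ := h2
  let T' : Set ↥S := ⇑e ⁻¹' T
  have hmem : (⟨A.root, hrS⟩ : ↥S) ∈ T' := by
    show e ⟨A.root, hrS⟩ ∈ T
    rw [he]; exact hrT
  have hmem' : A.root ∈ ((↑) '' T' : Set ↥A.verts) := ⟨⟨A.root, hrS⟩, hmem, rfl⟩
  have himg : ⇑e '' T' = T := Set.image_preimage_eq_of_subset (by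
    intro x hx
    exact ⟨e.symm x, e.apply_symm_apply x⟩)
  let i1 : A.adj.induce ((↑) '' T') ≃g (A.adj.induce S).induce T' :=
    (isoInduceInduce A.adj S T').symm
  let i2 : (A.adj.induce S).induce T' ≃g M.adj.induce (⇑e '' T') := isoInduceImage e T'
  let i3 : M.adj.induce (⇑e '' T') ≃g M.adj.induce T := isoOfSetEq M.adj himg
  let total : A.adj.induce ((↑) '' T') ≃g F.adj := (i1.trans (i2.trans i3)).trans e'
  refine ⟨(↑) '' T', hmem', ?_, total, ?_⟩
  · exact (SimpleGraph.Iso.connected_iff (i1.trans (i2.trans i3))).mpr hcT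
  · show e' ((i1.trans (i2.trans i3)) ⟨A.root, hmem'⟩) = F.root
    have hval : ((i1.trans (i2.trans i3)) ⟨A.root, hmem'⟩ : ↥M.verts) = M.root := by
      show ((i3 (i2 (i1 ⟨A.root, hmem'⟩))) : ↥M.verts) = M.root
      rw [isoOfSetEq_apply_val]
      show (e (i1 ⟨A.root, hmem'⟩) : ↥M.verts) = ↑M.root
      have : (i1 ⟨A.root, hmem'⟩ : ↥S) = ⟨A.root, hrS⟩ := Subtype.ext rfl
      rw [this, he]
    have : ((i1.trans (i2.trans i3)) ⟨A.root, hmem'⟩) = (⟨M.root, hrT⟩ : ↥T) :=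
      Subtype.ext hval
    rw [this, he']

/-- If `M` is realized in `A` on the vertex set `W`, then any RCIS of `A` supported
inside `W` is also an RCIS of `M`. -/
lemma hasRCIS_restrict {A M F : RGraph} {W S : Set ↥A.verts} (hrW : A.root ∈ W)
    (e : A.adj.induce W ≃g M.adj) (he : e ⟨A.root, hrW⟩ = M.root)
    (hS : S ⊆ W) (hrS : A.root ∈ S) (hcS : (A.adj.induce S).Connected)
    (eF : A.adj.induce S ≃g F.adj) (heF : eF ⟨A.root, hrS⟩ = F.root) :
    M.HasRCIS F := by
  let S₀ : Set ↥W := (↑) ⁻¹' S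
  have himg : ((↑) '' S₀ : Set ↥A.verts) = S := by
    rw [Subtype.image_preimage_coe]
    exact Set.inter_eq_self_of_subset_right hS
  have hmem0 : (⟨A.root, hrW⟩ : ↥W) ∈ S₀ := hrS
  have hmemT : M.root ∈ (⇑e '' S₀ : Set ↥M.verts) := ⟨⟨A.root, hrW⟩, hmem0, he⟩
  let i1 : M.adj.induce (⇑e '' S₀) ≃g (A.adj.induce W).induce S₀ := (isoInduceImage e S₀).symm
  let i2 : (A.adj.induce W).induce S₀ ≃g A.adj.induce ((↑) '' S₀) := isoInduceInduce A.adj W S₀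
  let i3 : A.adj.induce ((↑) '' S₀) ≃g A.adj.induce S := isoOfSetEq A.adj himg
  let pre : M.adj.induce (⇑e '' S₀) ≃g A.adj.induce S := i1.trans (i2.trans i3)
  refine ⟨⇑e '' S₀, hmemT, ?_, pre.trans eF, ?_⟩
  · exact (SimpleGraph.Iso.connected_iff pre).mpr hcS
  · show eF (pre ⟨M.root, hmemT⟩) = F.root
    have hval : ((pre ⟨M.root, hmemT⟩ : ↥S) : ↥A.verts) = A.root := by
      show ((i3 (i2 (i1 ⟨M.root, hmemT⟩))) : ↥A.verts) = A.root
      rw [isoOfSetEq_apply_val]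
      show (((i1 ⟨M.root, hmemT⟩ : ↥S₀) : ↥W) : ↥A.verts) = A.root
      have h1 : ((i1 ⟨M.root, hmemT⟩ : ↥S₀) : ↥W) = e.symm M.root := rfl
      rw [h1, ← he, e.symm_apply_apply]
    have : pre ⟨M.root, hmemT⟩ = (⟨A.root, hrS⟩ : ↥S) := Subtype.ext hval
    rw [this, heF]

/-- Extend a pair of injections into a bijection between equinumerous finite types. -/
lemma exists_equiv_extend {α β γ : Type} [Finite β] [Finite γ]
    (hcard : Nat.card γ = Nat.card β)
    (ι : α → γ) (hι : Function.Injective ι) (g : α → β) (hg : Function.Injective g) :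
    ∃ ψ : γ ≃ β, ∀ a, ψ (ι a) = g a := by
  classical
  have hcompl : Nat.card ↥((Set.range ι)ᶜ) = Nat.card ↥((Set.range g)ᶜ) := by
    have h1 := Set.ncard_add_ncard_compl (Set.range ι) (Set.toFinite _)
    have h2 := Set.ncard_add_ncard_compl (Set.range g) (Set.toFinite _)
    have h3 : (Set.range ι).ncard = (Set.range g).ncard := by
      rw [← Nat.card_coe_set_eq, ← Nat.card_coe_set_eq,
        Nat.card_range_of_injective hι, Nat.card_range_of_injective hg]
    rw [Nat.card_coe_set_eq, Nat.card_coe_set_eq]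
    omega
  have e2 : ↥((Set.range ι)ᶜ) ≃ ↥((Set.range g)ᶜ) := by
    have := Nat.equivFinOfCardPos (α := ↥((Set.range ι)ᶜ))
    exact (Finite.equivFin _).trans ((finCongr hcompl).trans (Finite.equivFin _).symm)
  let e1 : ↥(Set.range ι) ≃ ↥(Set.range g) :=
    (Equiv.ofInjective ι hι).symm.trans (Equiv.ofInjective g hg)
  refine ⟨((Equiv.Set.sumCompl (Set.range ι)).symm).trans
    ((e1.sumCongr e2).trans (Equiv.Set.sumCompl (Set.range g))), fun a => ?_⟩
  simp only [Equiv.trans_apply]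
  rw [Equiv.Set.sumCompl_symm_apply_of_mem (Set.mem_range_self a)]
  simp only [Equiv.sumCongr_apply, Sum.map_inl]
  have : e1 ⟨ι a, Set.mem_range_self a⟩ = ⟨g a, Set.mem_range_self a⟩ := by
    simp only [e1, Equiv.trans_apply]
    rw [show (⟨ι a, Set.mem_range_self a⟩ : ↥(Set.range ι)) = Equiv.ofInjective ι hι a from rfl]
    rw [Equiv.symm_apply_apply]
    rfl
  rw [this]
  exact Equiv.Set.sumCompl_apply_inl _ _

lemma hasRCIS_congr_iff (A : RGraph) {F F' : RGraph} (h : F.Iso F') :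
    A.HasRCIS F ↔ A.HasRCIS F' :=
  ⟨fun x => x.congr h, fun x => x.congr h.symm'⟩

lemma simUpTo_mono {r r' : ℕ} {A B : RGraph} (h : simUpTo r A B) (hle : r' ≤ r) :
    simUpTo r' A B := fun F hf hc => h F hf (hc.trans hle)

lemma simUpTo_iff_cg (r : ℕ) (A B : RGraph) :
    simUpTo r A B ↔ ∀ k, k < r → ∀ f, (A.HasRCIS (cg k f) ↔ B.HasRCIS (cg k f)) := by
  constructor
  · intro h k hk f
    exact h (cg k f) (cg_finite k f) (by rw [cg_card]; omega)
  · intro h F hfin hcard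
    have hpos : 0 < Nat.card F.verts := @Nat.card_pos _ ⟨F.root⟩ hfin
    obtain ⟨k, f, hk, hiso⟩ := exists_code_iso F hfin
    exact (hasRCIS_congr_iff A hiso).trans
      (((h k (by omega) f)).trans (hasRCIS_congr_iff B hiso).symm)

def extf {m : ℕ} (g : Fin m → Fin m → Bool) : ℕ → ℕ → Bool :=
  fun a b => if h : a < m ∧ b < m then g ⟨a, h.1⟩ ⟨b, h.2⟩ else false

lemma iso_cg_extf (k : ℕ) (f : ℕ → ℕ → Bool) :
    (cg k f).Iso (cg k (extf (fun a b : Fin (k+1) => f a b))) := by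
  apply iso_cg_of_eqOn
  intro a b ha hb
  simp only [extf]
  rw [dif_pos ⟨ha, hb⟩]

lemma pigeonhole_step (B : ℕ → RGraph) (r : ℕ) (T : Set ℕ) (hT : T.Infinite) :
    ∃ T' : Set ℕ, T' ⊆ T ∧ T'.Infinite ∧
      ∀ m ∈ T', ∀ n ∈ T', simUpTo r (B m) (B n) := by
  classical
  haveI := hT.to_subtype
  let cl : ℕ → (Σ k : Fin r, (Fin ((k : ℕ)+1) → Fin ((k : ℕ)+1) → Bool)) → Bool :=
    fun n c => decide ((B n).HasRCIS (cg (c.1 : ℕ) (extf c.2)))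
  obtain ⟨y, hy⟩ := Finite.exists_infinite_fiber (fun t : ↥T => cl ↑t)
  have hy' : ((fun t : ↥T => cl ↑t) ⁻¹' {y}).Infinite := Set.infinite_coe_iff.mp hy
  refine ⟨(↑) '' ((fun t : ↥T => cl ↑t) ⁻¹' {y}), Subtype.coe_image_subset _ _,
    hy'.image (Set.injOn_of_injective Subtype.val_injective), ?_⟩
  rintro m ⟨m', hm', rfl⟩ n ⟨n', hn', rfl⟩
  have hcl : cl ↑m' = cl ↑n' := by
    have h1 : cl ↑m' = y := hm'
    have h2 : cl ↑n' = y := hn'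
    rw [h1, h2]
  rw [simUpTo_iff_cg]
  intro k hk f
  have key : (B ↑m').HasRCIS (cg k (extf (fun a b : Fin (k+1) => f ↑a ↑b))) ↔
      (B ↑n').HasRCIS (cg k (extf (fun a b : Fin (k+1) => f ↑a ↑b))) := by
    have := congrFun hcl ⟨⟨k, hk⟩, fun a b => f ↑a ↑b⟩
    exact decide_eq_decide.mp this
  exact ((hasRCIS_congr_iff _ (iso_cg_extf k f)).trans key).trans
    (hasRCIS_congr_iff _ (iso_cg_extf k f)).symm

lemma simUpTo_zero (A B : RGraph) : simUpTo 0 A B := by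
  intro F hfin hc
  have hpos : 0 < Nat.card F.verts := @Nat.card_pos _ ⟨F.root⟩ hfin
  exact absurd hc (by omega)

lemma exists_subseq (B : ℕ → RGraph) :
    ∃ φ : ℕ → ℕ, StrictMono φ ∧
      ∀ r m n, r ≤ m → r ≤ n → simUpTo r (B (φ m)) (B (φ n)) := by
  classical
  choose Tf hTsub hTinf hTsim using
    fun (p : {T : Set ℕ // T.Infinite}) (r : ℕ) => pigeonhole_step B r p.1 p.2
  let step : {T : Set ℕ // T.Infinite} → ℕ → {T : Set ℕ // T.Infinite} :=
    fun p r => ⟨Tf p r, hTinf p r⟩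
  let S : ℕ → {T : Set ℕ // T.Infinite} :=
    fun r => Nat.rec ⟨Set.univ, Set.infinite_univ⟩ (fun r prev => step prev (r+1)) r
  have hSsub : ∀ r, (S (r+1)).1 ⊆ (S r).1 := fun r => hTsub (S r) (r+1)
  have hSsim : ∀ r, ∀ m ∈ (S (r+1)).1, ∀ n ∈ (S (r+1)).1, simUpTo (r+1) (B m) (B n) :=
    fun r => hTsim (S r) (r+1)
  have hchain : ∀ r r', r ≤ r' → (S r').1 ⊆ (S r).1 := by
    intro r r' h
    induction h with
    | refl => exact subset_rfl
    | step h ih => exact subset_trans (hSsub _) ih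
  have hgt : ∀ r (a : ℕ), ∃ b ∈ (S r).1, a < b := fun r a => (S r).2.exists_gt a
  choose nxt hnmem hngt using hgt
  let φ : ℕ → ℕ := fun n => Nat.rec (nxt 0 0) (fun n prev => nxt (n+1) prev) n
  have hφmem : ∀ n, φ n ∈ (S n).1 := by
    intro n
    cases n with
    | zero => exact hnmem 0 0
    | succ n => exact hnmem (n+1) _
  have hφmono : StrictMono φ := strictMono_nat_of_lt_succ (fun n => hngt (n+1) (φ n))
  refine ⟨φ, hφmono, ?_⟩
  intro r m n hm hn
  cases r with
  | zero => exact simUpTo_zero _ _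
  | succ r =>
    exact hSsim r _ (hchain _ _ hm (hφmem m)) _ (hchain _ _ hn (hφmem n))

lemma good_transfer (B : ℕ → RGraph)
    (H : ∀ r m n, r ≤ m → r ≤ n → simUpTo r (B m) (B n))
    {k : ℕ} {f : ℕ → ℕ → Bool} {n : ℕ} (hn : k+1 ≤ n) (h : (B n).HasRCIS (cg k f)) :
    ∀ m, k+1 ≤ m → (B m).HasRCIS (cg k f) := by
  intro m hm
  exact (H (k+1) n m hn hm (cg k f) (cg_finite k f) (le_of_eq (cg_card k f))).mp h

lemma amalg (B : ℕ → RGraph)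
    (H : ∀ r m n, r ≤ m → r ≤ n → simUpTo r (B m) (B n))
    {k : ℕ} {f : ℕ → ℕ → Bool} (hG : ∀ n, k+1 ≤ n → (B n).HasRCIS (cg k f))
    {k' : ℕ} {f' : ℕ → ℕ → Bool} (hG' : ∀ n, k'+1 ≤ n → (B n).HasRCIS (cg k' f')) :
    ∃ K F, (∀ n, K+1 ≤ n → (B n).HasRCIS (cg K F)) ∧ k ≤ K ∧
      (∀ a b (ha : a ∈ (cg k f).verts) (hb : b ∈ (cg k f).verts)
         (ha' : a ∈ (cg K F).verts) (hb' : b ∈ (cg K F).verts),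
         ((cg K F).adj.Adj ⟨a, ha'⟩ ⟨b, hb'⟩ ↔ (cg k f).adj.Adj ⟨a, ha⟩ ⟨b, hb⟩)) ∧
      (cg K F).HasRCIS (cg k' f') := by
  classical
  set n := (k+1) + (k'+1) with hn
  obtain ⟨S, hrS, hcS, eS, heS⟩ := hG n (by omega)
  obtain ⟨S', hrS', hcS', eS', heS'⟩ := hG' n (by omega)
  set U : Set ↥(B n).verts := S ∪ S' with hU
  have hrU : (B n).root ∈ U := Or.inl hrS
  have hcU : ((B n).adj.induce U).Connected :=
    SimpleGraph.induce_union_connected hcS.preconnected hcS'.preconnected ⟨(B n).root, hrS, hrS'⟩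
  haveI hfinS : Finite ↥S := Finite.of_equiv _ eS.toEquiv.symm
  haveI hfinS' : Finite ↥S' := Finite.of_equiv _ eS'.toEquiv.symm
  have hSfin : S.Finite := Set.finite_coe_iff.mp hfinS
  have hS'fin : S'.Finite := Set.finite_coe_iff.mp hfinS'
  have hUfin : U.Finite := hSfin.union hS'fin
  haveI : Finite ↥U := hUfin.to_subtype
  haveI : Nonempty ↥U := ⟨⟨(B n).root, hrU⟩⟩
  have hUpos : 0 < Nat.card ↥U := Nat.card_pos
  obtain ⟨K, hK⟩ : ∃ K, K+1 = Nat.card ↥U := ⟨Nat.card ↥U - 1, by omega⟩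
  have hcardS : Nat.card ↥S = k+1 := by rw [Nat.card_congr eS.toEquiv, cg_card]
  have hcardS' : Nat.card ↥S' = k'+1 := by rw [Nat.card_congr eS'.toEquiv, cg_card]
  have hle : k+1 ≤ K+1 := by
    rw [hK, ← hcardS, Nat.card_coe_set_eq, Nat.card_coe_set_eq]
    exact Set.ncard_le_ncard Set.subset_union_left hUfin
  have hub : K+1 ≤ n := by
    have h1 : U.ncard ≤ S.ncard + S'.ncard := by
      rw [hU]; exact Set.ncard_union_le S S'
    have h2 : Nat.card ↥U = U.ncard := Nat.card_coe_set_eq U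
    have h3 : Nat.card ↥S = S.ncard := Nat.card_coe_set_eq S
    have h4 : Nat.card ↥S' = S'.ncard := Nat.card_coe_set_eq S'
    omega
  let ι : ↥(cg k f).verts → ↥(Set.Iio (K+1)) := fun a => ⟨↑a, lt_of_lt_of_le a.2 hle⟩
  have hι : Function.Injective ι := by
    intro a b h
    have h1 : ((ι a : ↥(Set.Iio (K+1) : Set ℕ)) : ℕ) = ((ι b : ↥(Set.Iio (K+1) : Set ℕ)) : ℕ) :=
      congrArg (fun z : ↥(Set.Iio (K+1) : Set ℕ) => (z : ℕ)) h
    exact Subtype.ext h1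
  let g0 : ↥(cg k f).verts → ↥U := fun a => ⟨↑(eS.symm a), Or.inl (eS.symm a).2⟩
  have hg0 : Function.Injective g0 := by
    intro a b h
    have h1 : ((eS.symm a : ↥S) : ↥(B n).verts) = ↑(eS.symm b) := by
      simpa [g0, Subtype.ext_iff] using h
    exact eS.symm.toEquiv.injective (Subtype.ext h1)
  haveI : Finite ↥(Set.Iio (K+1) : Set ℕ) := (Set.finite_Iio _).to_subtype
  have hcard : Nat.card ↥(Set.Iio (K+1) : Set ℕ) = Nat.card ↥U := by
    rw [card_Iio_nat, hK]
  obtain ⟨ψ, hψ⟩ := exists_equiv_extend hcard ι hι g0 hg0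
  set F : ℕ → ℕ → Bool := fun a b =>
    decide (∃ (ha : a ∈ Set.Iio (K+1)) (hb : b ∈ Set.Iio (K+1)),
      (B n).adj.Adj ↑(ψ ⟨a, ha⟩) ↑(ψ ⟨b, hb⟩)) with hFdef
  have keyF : ∀ x y : ↥(Set.Iio (K+1) : Set ℕ),
      (F ↑x ↑y = true) ↔ (B n).adj.Adj ↑(ψ x) ↑(ψ y) := by
    intro x y
    rw [hFdef, decide_eq_true_iff]
    constructor
    · rintro ⟨ha, hb, h⟩
      simpa using h
    · intro h
      exact ⟨x.2, y.2, by simpa using h⟩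
  have hψ0 : ((ψ ⟨0, Nat.succ_pos K⟩ : ↥U) : ↥(B n).verts) = (B n).root := by
    have h1 : (⟨0, Nat.succ_pos K⟩ : ↥(Set.Iio (K+1) : Set ℕ)) = ι (cg k f).root :=
      Subtype.ext rfl
    rw [h1, hψ]
    show ((eS.symm (cg k f).root : ↥S) : ↥(B n).verts) = (B n).root
    have h2 : eS.symm (cg k f).root = ⟨(B n).root, hrS⟩ := by
      rw [← heS]
      exact eS.symm_apply_apply _
    rw [h2]
  have hadj : ∀ x y : ↥U,
      (cg K F).adj.Adj (ψ.symm x) (ψ.symm y) ↔ ((B n).adj.induce U).Adj x y := by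
    intro x y
    refine (cg_adj (k := K) (f := F) (ψ.symm x) (ψ.symm y)).trans ?_
    show _ ↔ (B n).adj.Adj ↑x ↑y
    constructor
    · rintro ⟨hne, h | h⟩
      · have := (keyF _ _).1 h
        rwa [ψ.apply_symm_apply, ψ.apply_symm_apply] at this
      · have := (keyF _ _).1 h
        rw [ψ.apply_symm_apply, ψ.apply_symm_apply] at this
        exact this.symm
    · intro h
      refine ⟨fun heq => ?_, Or.inl ((keyF _ _).2 ?_)⟩
      · have : x = y := by
          have := congrArg ψ heq
          rwa [ψ.apply_symm_apply, ψ.apply_symm_apply] at this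
        exact (B n).adj.ne_of_adj h (by rw [this])
      · rw [ψ.apply_symm_apply, ψ.apply_symm_apply]
        exact h
  let eU : (B n).adj.induce U ≃g (cg K F).adj :=
    { toEquiv := ψ.symm, map_rel_iff' := hadj _ _ }
  have heU : eU ⟨(B n).root, hrU⟩ = (cg K F).root := by
    have h1 : (⟨(B n).root, hrU⟩ : ↥U) = ψ ⟨0, Nat.succ_pos K⟩ := Subtype.ext hψ0.symm
    show ψ.symm _ = _
    rw [h1, ψ.symm_apply_apply]
    rfl
  have hreal : (B n).HasRCIS (cg K F) := ⟨U, hrU, hcU, eU, heU⟩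
  refine ⟨K, F, good_transfer B H hub hreal, by omega, ?_, ?_⟩
  · intro a b ha hb ha' hb'
    rw [cg_adj, cg_adj]
    have hx : (⟨a, ha'⟩ : ↥(Set.Iio (K+1) : Set ℕ)) = ι ⟨a, ha⟩ := Subtype.ext rfl
    have hy : (⟨b, hb'⟩ : ↥(Set.Iio (K+1) : Set ℕ)) = ι ⟨b, hb⟩ := Subtype.ext rfl
    have hFa : F a b = true ↔
        (B n).adj.Adj ↑(g0 ⟨a, ha⟩) ↑(g0 ⟨b, hb⟩) := by
      have := keyF ⟨a, ha'⟩ ⟨b, hb'⟩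
      rw [hx, hy, hψ, hψ] at this
      exact this
    have hFb : F b a = true ↔
        (B n).adj.Adj ↑(g0 ⟨b, hb⟩) ↑(g0 ⟨a, ha⟩) := by
      have := keyF ⟨b, hb'⟩ ⟨a, ha'⟩
      rw [hx, hy, hψ, hψ] at this
      exact this
    have hadjS : ∀ (x y : ↥(cg k f).verts),
        (B n).adj.Adj ↑(g0 x) ↑(g0 y) ↔ (cg k f).adj.Adj x y := by
      intro x y
      show (B n).adj.Adj ↑(eS.symm x : ↥S) ↑(eS.symm y : ↥S) ↔ _
      exact eS.symm.map_adj_iff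
    constructor
    · rintro ⟨hne, h | h⟩
      · exact (hadjS _ _).1 (hFa.1 h)
      · exact ((hadjS _ _).1 (hFb.1 h)).symm
    · intro h
      refine ⟨fun heq => ?_, Or.inl (hFa.2 ((hadjS _ _).2 h))⟩
      have hval : a = b := Subtype.ext_iff.mp heq
      exact (cg k f).adj.ne_of_adj h (Subtype.ext hval)
  · exact hasRCIS_restrict hrU eU heU Set.subset_union_right hrS' hcS' eS' heS'

lemma limit_exists (B : ℕ → RGraph)
    (H : ∀ r m n, r ≤ m → r ≤ n → simUpTo r (B m) (B n)) :
    ∃ L : RGraph, L.adj.Connected ∧ ∀ r n, r ≤ n → simUpTo r (B n) L := by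
  classical
  -- the "eventually realized" codes
  let P : ℕ × (ℕ → ℕ → Bool) → Prop := fun c => ∀ n, c.1+1 ≤ n → (B n).HasRCIS (cg c.1 c.2)
  -- enumeration of all finite codes
  haveI : Nonempty (Σ k : ℕ, (Fin (k+1) → Fin (k+1) → Bool)) :=
    ⟨⟨0, fun _ _ => false⟩⟩
  obtain ⟨sq, hsq⟩ := exists_surjective_nat (Σ k : ℕ, (Fin (k+1) → Fin (k+1) → Bool))
  let en : ℕ → ℕ × (ℕ → ℕ → Bool) := fun i => ⟨(sq i).1, extf (sq i).2⟩
  -- one construction step: absorb code `en i` if it is eventually realized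
  have step : ∀ (c : {c : ℕ × (ℕ → ℕ → Bool) // P c}) (i : ℕ),
      ∃ c' : {c : ℕ × (ℕ → ℕ → Bool) // P c},
        c.1.1 ≤ c'.1.1 ∧
        (∀ a b (ha : a ∈ (cg c.1.1 c.1.2).verts) (hb : b ∈ (cg c.1.1 c.1.2).verts)
           (ha' : a ∈ (cg c'.1.1 c'.1.2).verts) (hb' : b ∈ (cg c'.1.1 c'.1.2).verts),
           ((cg c'.1.1 c'.1.2).adj.Adj ⟨a, ha'⟩ ⟨b, hb'⟩ ↔
             (cg c.1.1 c.1.2).adj.Adj ⟨a, ha⟩ ⟨b, hb⟩)) ∧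
        (P (en i) → (cg c'.1.1 c'.1.2).HasRCIS (cg (en i).1 (en i).2)) := by
    intro c i
    by_cases hgi : P (en i)
    · obtain ⟨K, F, h1, h2, h3, h4⟩ := amalg B H c.2 hgi
      exact ⟨⟨⟨K, F⟩, h1⟩, h2, h3, fun _ => h4⟩
    · exact ⟨c, le_rfl, fun a b ha hb ha' hb' => Iff.rfl, fun h => absurd h hgi⟩
  choose nx hnx1 hnx2 hnx3 using step
  have hbase : P ⟨0, fun _ _ => false⟩ := fun n _ => hasRCIS_cg_zero (B n) _
  let c : ℕ → {c : ℕ × (ℕ → ℕ → Bool) // P c} :=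
    fun i => Nat.rec ⟨⟨0, fun _ _ => false⟩, hbase⟩ (fun i prev => nx prev i) i
  have hcsucc : ∀ i, c (i+1) = nx (c i) i := fun i => rfl
  let M : ℕ → ℕ := fun i => (c i).1.1 + 1
  have hmono : Monotone M := monotone_nat_of_le_succ (fun i =>
    Nat.succ_le_succ (hnx1 (c i) i))
  -- the "abstract adjacency" of the chain
  let Adj' : ℕ → ℕ → ℕ → Prop := fun i a b =>
    ∃ (ha : a ∈ (cg (c i).1.1 (c i).1.2).verts) (hb : b ∈ (cg (c i).1.1 (c i).1.2).verts),
      (cg (c i).1.1 (c i).1.2).adj.Adj ⟨a, ha⟩ ⟨b, hb⟩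
  have hAdj'_intro : ∀ i a b (ha : a ∈ (cg (c i).1.1 (c i).1.2).verts)
      (hb : b ∈ (cg (c i).1.1 (c i).1.2).verts),
      (cg (c i).1.1 (c i).1.2).adj.Adj ⟨a, ha⟩ ⟨b, hb⟩ → Adj' i a b :=
    fun i a b ha hb h => ⟨ha, hb, h⟩
  have hAdj'_elim : ∀ i a b (ha : a ∈ (cg (c i).1.1 (c i).1.2).verts)
      (hb : b ∈ (cg (c i).1.1 (c i).1.2).verts),
      Adj' i a b → (cg (c i).1.1 (c i).1.2).adj.Adj ⟨a, ha⟩ ⟨b, hb⟩ := by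
    rintro i a b ha hb ⟨ha2, hb2, h⟩
    exact h
  have hmemM : ∀ i a, a < M i → a ∈ (cg (c i).1.1 (c i).1.2).verts := fun i a h => h
  -- coherence along the chain
  have hcoh : ∀ j i, i ≤ j → ∀ a b, a < M i → b < M i → (Adj' j a b ↔ Adj' i a b) := by
    intro j i hij
    induction hij with
    | refl => intro a b _ _; exact Iff.rfl
    | @step j hij ih =>
      intro a b ha hb
      have haj : a < M j := lt_of_lt_of_le ha (hmono hij)
      have hbj : b < M j := lt_of_lt_of_le hb (hmono hij)
      have h2 := hnx2 (c j) j a b (hmemM j a haj) (hmemM j b hbj)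
      constructor
      · intro h
        obtain ⟨ha', hb', hadj⟩ := h
        exact (ih a b ha hb).mp ⟨hmemM j a haj, hmemM j b hbj, (h2 ha' hb').mp hadj⟩
      · intro h
        have h3 := hAdj'_elim j a b (hmemM j a haj) (hmemM j b hbj) ((ih a b ha hb).mpr h)
        have ha' : a ∈ (cg (c (j+1)).1.1 (c (j+1)).1.2).verts :=
          hmemM (j+1) a (lt_of_lt_of_le haj (hmono (Nat.le_succ j)))
        have hb' : b ∈ (cg (c (j+1)).1.1 (c (j+1)).1.2).verts :=
          hmemM (j+1) b (lt_of_lt_of_le hbj (hmono (Nat.le_succ j)))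
        exact ⟨ha', hb', (h2 ha' hb').mpr h3⟩
  -- the limit graph
  let L : RGraph :=
    { verts := {x : ℕ | ∃ i, x < M i}
      adj :=
        { Adj := fun a b => ∃ i, Adj' i ↑a ↑b
          symm := by
            refine ⟨?_⟩
            rintro a b ⟨i, ha, hb, h⟩
            exact ⟨i, hb, ha, h.symm⟩
          loopless := by
            refine ⟨?_⟩
            rintro a ⟨i, ha, hb, h⟩
            exact (cg (c i).1.1 (c i).1.2).adj.loopless.irrefl _ h }
      root := ⟨0, ⟨0, Nat.succ_pos _⟩⟩ }
  -- the initial segments of L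
  let Vi : ℕ → Set ↥L.verts := fun i => {x | ↑x < M i}
  have hrootVi : ∀ i, L.root ∈ Vi i := fun i => Nat.succ_pos _
  let ei : ∀ i, L.adj.induce (Vi i) ≃g (cg (c i).1.1 (c i).1.2).adj := fun i =>
    { toFun := fun x => ⟨↑↑x, x.2⟩
      invFun := fun y => ⟨⟨↑y, ⟨i, y.2⟩⟩, y.2⟩
      left_inv := fun x => by ext; rfl
      right_inv := fun y => by ext; rfl
      map_rel_iff' := by
        intro a b
        show (cg (c i).1.1 (c i).1.2).adj.Adj _ _ ↔ ∃ j, Adj' j ↑↑a ↑↑b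
        constructor
        · intro h
          exact ⟨i, hAdj'_intro i _ _ a.2 b.2 h⟩
        · rintro ⟨j, h⟩
          rcases le_total i j with hij | hji
          · exact hAdj'_elim i _ _ a.2 b.2 ((hcoh j i hij _ _ a.2 b.2).mp h)
          · obtain ⟨haj, hbj, hadj⟩ := h
            exact hAdj'_elim i _ _ a.2 b.2
              ((hcoh i j hji _ _ haj hbj).mpr ⟨haj, hbj, hadj⟩) }
  have hei_root : ∀ i, (ei i) ⟨L.root, hrootVi i⟩ = (cg (c i).1.1 (c i).1.2).root :=
    fun i => rfl
  -- each chain graph is connected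
  have hconn_cg : ∀ i, (cg (c i).1.1 (c i).1.2).adj.Connected := by
    intro i
    obtain ⟨S, hrS, hcS, e, he⟩ := (c i).2 (M i) le_rfl
    exact (SimpleGraph.Iso.connected_iff e).mp hcS
  have hconn_Vi : ∀ i, (L.adj.induce (Vi i)).Connected :=
    fun i => (SimpleGraph.Iso.connected_iff (ei i)).mpr (hconn_cg i)
  -- L is connected
  have hLconn : L.adj.Connected := by
    rw [SimpleGraph.connected_iff]
    have hreach : ∀ v : ↥L.verts, L.adj.Reachable v L.root := by
      intro v
      obtain ⟨i, hvi⟩ := v.2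
      have hr := (hconn_Vi i).preconnected ⟨v, hvi⟩ ⟨L.root, hrootVi i⟩
      have := hr.map (SimpleGraph.Embedding.induce (Vi i)).toHom
      convert this using 2 <;> rfl
    exact ⟨fun u v => (hreach u).trans (hreach v).symm, ⟨L.root⟩⟩
  -- L contains each chain graph as an RCIS
  have hLhasCg : ∀ i, L.HasRCIS (cg (c i).1.1 (c i).1.2) :=
    fun i => ⟨Vi i, hrootVi i, hconn_Vi i, ei i, hei_root i⟩
  -- L absorbs every eventually-realized enumerated code
  have habs : ∀ i, P (en i) → L.HasRCIS (cg (en i).1 (en i).2) :=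
    fun i hgi => hasRCIS_trans (hLhasCg (i+1)) (hnx3 (c i) i hgi)
  -- every finite RCIS of L is realized in the tail
  have hproj : ∀ F : RGraph, Finite F.verts → L.HasRCIS F →
      ∃ n0, ∀ n, n0 ≤ n → (B n).HasRCIS F := by
    intro F hFfin hLF
    obtain ⟨S, hrS, hcS, eF, heF⟩ := hLF
    haveI : Finite ↥S := Finite.of_equiv _ eF.toEquiv.symm
    haveI : Nonempty ↥S := ⟨⟨L.root, hrS⟩⟩
    have hidx : ∀ x : ↥L.verts, ∃ i, ↑x < M i := fun x => x.2
    choose idx hidxlt using hidx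
    obtain ⟨x0, hx0⟩ := Finite.exists_max (fun x : ↥S => idx ↑x)
    set j := idx ↑x0 with hj
    have hSsub : S ⊆ Vi j := by
      intro x hx
      exact lt_of_lt_of_le (hidxlt x) (hmono (hx0 ⟨x, hx⟩))
    have h1 : (cg (c j).1.1 (c j).1.2).HasRCIS F :=
      hasRCIS_restrict (hrootVi j) (ei j) (hei_root j) hSsub hrS hcS eF heF
    exact ⟨M j, fun n hn => hasRCIS_trans ((c j).2 n hn) h1⟩
  refine ⟨L, hLconn, ?_⟩
  intro r n hrn F hFfin hcard
  obtain ⟨k, f, hk, hiso⟩ := exists_code_iso F hFfin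
  have hkr : k + 1 ≤ r := by omega
  constructor
  · intro h
    have h2 : (B n).HasRCIS (cg k f) := h.congr hiso
    have hg : P ⟨k, f⟩ := good_transfer B H (le_trans hkr hrn) h2
    obtain ⟨i, hi⟩ := hsq ⟨k, fun a b : Fin (k+1) => f ↑a ↑b⟩
    have hen : en i = (k, extf (fun a b : Fin (k+1) => f ↑a ↑b)) := by
      show ((sq i).1, extf (sq i).2) = _
      rw [hi]
    have hgi : P (en i) := by
      rw [hen]
      exact fun m hm => (hg m hm).congr (iso_cg_extf k f)
    have h3 := habs i hgi
    rw [hen] at h3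
    exact (h3.congr (iso_cg_extf k f).symm').congr hiso.symm'
  · intro h
    obtain ⟨n0, hp⟩ := hproj F hFfin h
    have h4 : (B (max n n0)).HasRCIS F := hp _ (le_max_right n n0)
    exact (H (Nat.card F.verts) (max n n0) n
      (le_trans (hcard.trans hrn) (le_max_left n n0)) (hcard.trans hrn)
      F hFfin le_rfl).mp h4

end RGraph

/-- The (quotient of the) space of countable connected rooted graphs with the
similarity pseudometric is compact (stated as sequential compactness, which is
equivalent for (pseudo)metric spaces). -/
theorem compact_CRGraph (u : ℕ → CRGraph) :
    ∃ φ : ℕ → ℕ, StrictMono φ ∧ ∃ L : CRGraph,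
      ∀ ε : ℝ≥0∞, 0 < ε → ∃ N : ℕ, ∀ n ≥ N, dC (u (φ n)) L < ε := by
  obtain ⟨φ, hφ, hsim⟩ := RGraph.exists_subseq (fun n => (u n).1)
  obtain ⟨L, hLconn, hL⟩ := RGraph.limit_exists (fun n => (u (φ n)).1) hsim
  refine ⟨φ, hφ, ⟨L, hLconn⟩, ?_⟩
  intro ε hε
  obtain ⟨r, hr⟩ := ENNReal.exists_nat_gt (ENNReal.inv_ne_top.mpr hε.ne')
  refine ⟨r, fun n hn => ?_⟩
  show (sSup {x : ℝ≥0∞ | ∃ r' : ℕ, x = (r' : ℝ≥0∞) ∧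
      RGraph.simUpTo r' (u (φ n)).1 L})⁻¹ < ε
  have hmem : (r : ℝ≥0∞) ∈ {x : ℝ≥0∞ | ∃ r' : ℕ, x = (r' : ℝ≥0∞) ∧
      RGraph.simUpTo r' (u (φ n)).1 L} := ⟨r, rfl, hL r n hn⟩
  have h1 : ε⁻¹ < sSup {x : ℝ≥0∞ | ∃ r' : ℕ, x = (r' : ℝ≥0∞) ∧
      RGraph.simUpTo r' (u (φ n)).1 L} := lt_of_lt_of_le hr (le_sSup hmem)
  have h2 := ENNReal.inv_lt_inv.mpr h1
  rwa [inv_inv] at h2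
end

section
/- Let G be the rooted graph obtained as the join (root-identification) of paths of length n for every n ∈ ℕ, and let H be the join of G with one infinite ray. Then d(G,H) = 0, i.e., G and H contain exactly the same isomorphism types of finite rooted connected induced subgraphs, although G and H are not isomorphic. -/
open scoped ENNReal

/-- Vertex set of the join of one path of length `n` for every `n`:
vertex `0` is the common root, and `Nat.pair n i` (for `1 ≤ i ≤ n`) is the
`i`-th vertex of the path of length `n`. -/
def pathsVerts : Set ℕ :=
  {m | m = 0 ∨ ∃ n i : ℕ, 1 ≤ i ∧ i ≤ n ∧ m = Nat.pair n i}

/-- Edges of the join of paths: the root is joined to the first vertex of each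
path, and consecutive vertices of each path are joined. -/
def pathsRel (a b : ℕ) : Prop :=
  (a = 0 ∧ ∃ n : ℕ, 1 ≤ n ∧ b = Nat.pair n 1) ∨
  (∃ n i : ℕ, 1 ≤ i ∧ i + 1 ≤ n ∧ a = Nat.pair n i ∧ b = Nat.pair n (i + 1))

/-- `G`: the join (root-identification) of paths of length `n` for every `n ∈ ℕ`. -/
def pathsJoin : RGraph :=
  ⟨pathsVerts, SimpleGraph.fromRel (fun a b => pathsRel a.1 b.1), ⟨0, Or.inl rfl⟩⟩

/-- Vertices of the additional infinite ray: `Nat.pair 0 j` for `j ≥ 1`. -/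
def rayVerts : Set ℕ := {m | ∃ j : ℕ, 1 ≤ j ∧ m = Nat.pair 0 j}

/-- Edges of the additional infinite ray, attached to the root. -/
def rayRel (a b : ℕ) : Prop :=
  (a = 0 ∧ b = Nat.pair 0 1) ∨
  (∃ j : ℕ, 1 ≤ j ∧ a = Nat.pair 0 j ∧ b = Nat.pair 0 (j + 1))

/-- `H`: the join of `G` with one infinite ray. -/
def pathsRayJoin : RGraph :=
  ⟨pathsVerts ∪ rayVerts,
    SimpleGraph.fromRel (fun a b => pathsRel a.1 b.1 ∨ rayRel a.1 b.1),
    ⟨0, Or.inl (Or.inl rfl)⟩⟩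



open SimpleGraph

lemma RGraph.hasRCIS_transfer {A B F : RGraph} (S : Set A.verts) (hr : A.root ∈ S)
    (hc : (A.adj.induce S).Connected) (e : A.adj.induce S ≃g F.adj)
    (he : (e ⟨A.root, hr⟩ : F.verts) = F.root)
    (φ : ℕ → ℕ)
    (hmem : ∀ a : A.verts, a ∈ S → φ a ∈ B.verts)
    (hroot : φ (A.root : ℕ) = (B.root : ℕ))
    (hinj : ∀ a b : A.verts, a ∈ S → b ∈ S → φ a = φ b → a = b)
    (hadj : ∀ a b : A.verts, ∀ ha : a ∈ S, ∀ hb : b ∈ S,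
      A.adj.Adj a b ↔ B.adj.Adj ⟨φ a, hmem a ha⟩ ⟨φ b, hmem b hb⟩) :
    B.HasRCIS F := by
  classical
  set T : Set B.verts := {t | ∃ a : A.verts, ∃ _ : a ∈ S, (t : ℕ) = φ a} with hT
  have hrootT : B.root ∈ T := ⟨A.root, hr, hroot.symm⟩
  let f : S → T := fun a => ⟨⟨φ a, hmem a a.2⟩, a.1, a.2, rfl⟩
  have hfinj : Function.Injective f := by
    intro a b h
    have h2 : φ (a : A.verts) = φ (b : A.verts) :=
      congrArg (fun x : T => ((x : B.verts) : ℕ)) h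
    exact Subtype.ext (hinj a b a.2 b.2 h2)
  have hfsurj : Function.Surjective f := by
    rintro ⟨t, a, ha, hta⟩
    exact ⟨⟨a, ha⟩, Subtype.ext (Subtype.ext hta.symm)⟩
  let ψ : (A.adj.induce S) ≃g (B.adj.induce T) :=
    { toEquiv := Equiv.ofBijective f ⟨hfinj, hfsurj⟩
      map_rel_iff' := by
        intro a b
        exact (hadj a b a.2 b.2).symm }
  refine ⟨T, hrootT, ψ.connected_iff.mp hc, ψ.symm.trans e, ?_⟩
  have hψ : ψ ⟨A.root, hr⟩ = ⟨B.root, hrootT⟩ :=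
    Subtype.ext (Subtype.ext hroot)
  have h2 : ψ.symm ⟨B.root, hrootT⟩ = ⟨A.root, hr⟩ := by
    rw [← hψ]; exact ψ.toEquiv.symm_apply_apply _
  show e (ψ.symm ⟨B.root, hrootT⟩) = F.root
  rw [h2, he]

lemma pair_ne_zero {n i : ℕ} (hi : 1 ≤ i) : Nat.pair n i ≠ 0 := by
  intro h
  have := (Nat.pair_eq_pair (c := 0) (d := 0)).mp h
  omega

lemma not_mem_both {m : ℕ} (hp : m ∈ pathsVerts) (hr : m ∈ rayVerts) : False := by
  obtain ⟨j, hj, rfl⟩ := hr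
  rcases hp with h | ⟨n, i, h1, h2, h⟩
  · exact pair_ne_zero hj h
  · have := Nat.pair_eq_pair.mp h.symm
    omega

lemma ray_not_rel {a b : ℕ} (ha : a ∈ pathsVerts) (hb : b ∈ pathsVerts)
    (h : rayRel a b) : False := by
  rcases h with ⟨_, rfl⟩ | ⟨j, hj, rfl, rfl⟩
  · exact not_mem_both hb ⟨1, le_refl 1, rfl⟩
  · exact not_mem_both ha ⟨j, hj, rfl⟩

def phi (n m : ℕ) : ℕ :=
  if (Nat.unpair m).1 = 0 ∧ 1 ≤ (Nat.unpair m).2 then Nat.pair n (Nat.unpair m).2 else m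

lemma phi_zero (n : ℕ) : phi n 0 = 0 := by simp [phi]

lemma phi_pair (n : ℕ) {k i : ℕ} (h : 1 ≤ i) (h2 : i ≤ k) :
    phi n (Nat.pair k i) = Nat.pair k i := by
  rw [phi, if_neg]; rw [Nat.unpair_pair]; simp; omega

lemma phi_ray (n : ℕ) {j : ℕ} (hj : 1 ≤ j) : phi n (Nat.pair 0 j) = Nat.pair n j := by
  simp [phi, Nat.unpair_pair, hj]

lemma mem_cases {m : ℕ} (h : m ∈ pathsVerts ∪ rayVerts) :
    m = 0 ∨ (∃ k i, 1 ≤ i ∧ i ≤ k ∧ m = Nat.pair k i) ∨ (∃ j, 1 ≤ j ∧ m = Nat.pair 0 j) := by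
  rcases h with (h | h) | h
  · exact Or.inl h
  · exact Or.inr (Or.inl h)
  · exact Or.inr (Or.inr h)



lemma pe {a b c d : ℕ} (h : Nat.pair a b = Nat.pair c d) : a = c ∧ b = d :=
  Nat.pair_eq_pair.mp h

lemma rel_iff {N a b : ℕ} (ha : a ∈ pathsVerts ∪ rayVerts) (hb : b ∈ pathsVerts ∪ rayVerts)
    (haN : a ≤ N) (hbN : b ≤ N) :
    (pathsRel a b ∨ rayRel a b) ↔ pathsRel (phi (N + 1) a) (phi (N + 1) b) := by
  rcases mem_cases ha with rfl | ⟨k, i, hi1, hik, rfl⟩ | ⟨j, hj, rfl⟩ <;>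
    rcases mem_cases hb with rfl | ⟨k', i', hi1', hik', rfl⟩ | ⟨j', hj', rfl⟩
  -- (Z,Z)
  · rw [phi_zero]
    constructor
    · rintro ((⟨ha0, m, hm, hb2⟩ | ⟨m, i2, h1, h2, ha2, hb2⟩) | (⟨ha0, hb2⟩ | ⟨j2, hj2, ha2, hb2⟩))
      · exact absurd hb2.symm (pair_ne_zero le_rfl)
      · exact absurd ha2.symm (pair_ne_zero h1)
      · exact absurd hb2.symm (pair_ne_zero le_rfl)
      · exact absurd ha2.symm (pair_ne_zero hj2)
    · rintro (⟨ha0, m, hm, hb2⟩ | ⟨m, i2, h1, h2, ha2, hb2⟩)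
      · exact absurd hb2.symm (pair_ne_zero le_rfl)
      · exact absurd ha2.symm (pair_ne_zero h1)
  -- (Z,P)
  · rw [phi_zero, phi_pair _ hi1' hik']
    constructor
    · rintro ((⟨ha0, m, hm, hb2⟩ | ⟨m, i2, h1, h2, ha2, hb2⟩) | (⟨ha0, hb2⟩ | ⟨j2, hj2, ha2, hb2⟩))
      · obtain ⟨e1, e2⟩ := pe hb2
        exact Or.inl ⟨rfl, k', by omega, by rw [e2]⟩
      · exact absurd ha2.symm (pair_ne_zero h1)
      · obtain ⟨e1, e2⟩ := pe hb2; omega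
      · exact absurd ha2.symm (pair_ne_zero hj2)
    · rintro (⟨ha0, m, hm, hb2⟩ | ⟨m, i2, h1, h2, ha2, hb2⟩)
      · exact Or.inl (Or.inl ⟨rfl, m, hm, hb2⟩)
      · exact absurd ha2.symm (pair_ne_zero h1)
  -- (Z,R)
  · rw [phi_zero, phi_ray _ hj']
    constructor
    · rintro ((⟨ha0, m, hm, hb2⟩ | ⟨m, i2, h1, h2, ha2, hb2⟩) | (⟨ha0, hb2⟩ | ⟨j2, hj2, ha2, hb2⟩))
      · obtain ⟨e1, e2⟩ := pe hb2; omega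
      · exact absurd ha2.symm (pair_ne_zero h1)
      · obtain ⟨e1, e2⟩ := pe hb2; subst e2
        exact Or.inl ⟨rfl, N + 1, by omega, rfl⟩
      · exact absurd ha2.symm (pair_ne_zero hj2)
    · rintro (⟨ha0, m, hm, hb2⟩ | ⟨m, i2, h1, h2, ha2, hb2⟩)
      · obtain ⟨e1, e2⟩ := pe hb2; subst e2
        exact Or.inr (Or.inl ⟨rfl, rfl⟩)
      · exact absurd ha2.symm (pair_ne_zero h1)
  -- (P,Z)
  · rw [phi_zero, phi_pair _ hi1 hik]
    constructor
    · rintro ((⟨ha0, m, hm, hb2⟩ | ⟨m, i2, h1, h2, ha2, hb2⟩) | (⟨ha0, hb2⟩ | ⟨j2, hj2, ha2, hb2⟩))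
      · exact absurd hb2.symm (pair_ne_zero le_rfl)
      · exact absurd hb2.symm (pair_ne_zero (by omega))
      · exact absurd hb2.symm (pair_ne_zero le_rfl)
      · exact absurd hb2.symm (pair_ne_zero (by omega))
    · rintro (⟨ha0, m, hm, hb2⟩ | ⟨m, i2, h1, h2, ha2, hb2⟩)
      · exact absurd hb2.symm (pair_ne_zero le_rfl)
      · exact absurd hb2.symm (pair_ne_zero (by omega))
  -- (P,P)
  · rw [phi_pair _ hi1 hik, phi_pair _ hi1' hik']
    constructor
    · rintro ((h | h) | (⟨ha0, hb2⟩ | ⟨j2, hj2, ha2, hb2⟩))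
      · exact Or.inl h
      · exact Or.inr h
      · exact absurd ha0 (pair_ne_zero hi1)
      · obtain ⟨e1, e2⟩ := pe ha2; omega
    · exact fun h => Or.inl h
  -- (P,R)
  · rw [phi_pair _ hi1 hik, phi_ray _ hj']
    have hk : k ≤ N := le_trans (Nat.left_le_pair k i) haN
    constructor
    · rintro ((⟨ha0, m, hm, hb2⟩ | ⟨m, i2, h1, h2, ha2, hb2⟩) | (⟨ha0, hb2⟩ | ⟨j2, hj2, ha2, hb2⟩))
      · exact absurd ha0 (pair_ne_zero hi1)
      · obtain ⟨e1, e2⟩ := pe hb2; omega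
      · exact absurd ha0 (pair_ne_zero hi1)
      · obtain ⟨e1, e2⟩ := pe ha2; omega
    · rintro (⟨ha0, m, hm, hb2⟩ | ⟨m, i2, h1, h2, ha2, hb2⟩)
      · exact absurd ha0 (pair_ne_zero hi1)
      · obtain ⟨e1, e2⟩ := pe ha2
        obtain ⟨e3, e4⟩ := pe hb2
        omega
  -- (R,Z)
  · rw [phi_zero, phi_ray _ hj]
    constructor
    · rintro ((⟨ha0, m, hm, hb2⟩ | ⟨m, i2, h1, h2, ha2, hb2⟩) | (⟨ha0, hb2⟩ | ⟨j2, hj2, ha2, hb2⟩))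
      · exact absurd ha0 (pair_ne_zero hj)
      · exact absurd hb2.symm (pair_ne_zero (by omega))
      · exact absurd ha0 (pair_ne_zero hj)
      · exact absurd hb2.symm (pair_ne_zero (by omega))
    · rintro (⟨ha0, m, hm, hb2⟩ | ⟨m, i2, h1, h2, ha2, hb2⟩)
      · exact absurd hb2.symm (pair_ne_zero le_rfl)
      · exact absurd hb2.symm (pair_ne_zero (by omega))
  -- (R,P)
  · rw [phi_ray _ hj, phi_pair _ hi1' hik']
    have hk' : k' ≤ N := le_trans (Nat.left_le_pair k' i') hbN
    constructor
    · rintro ((⟨ha0, m, hm, hb2⟩ | ⟨m, i2, h1, h2, ha2, hb2⟩) | (⟨ha0, hb2⟩ | ⟨j2, hj2, ha2, hb2⟩))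
      · exact absurd ha0 (pair_ne_zero hj)
      · obtain ⟨e1, e2⟩ := pe ha2; omega
      · exact absurd ha0 (pair_ne_zero hj)
      · obtain ⟨e1, e2⟩ := pe hb2; omega
    · rintro (⟨ha0, m, hm, hb2⟩ | ⟨m, i2, h1, h2, ha2, hb2⟩)
      · exact absurd ha0 (pair_ne_zero hj)
      · obtain ⟨e1, e2⟩ := pe ha2
        obtain ⟨e3, e4⟩ := pe hb2
        omega
  -- (R,R)
  · rw [phi_ray _ hj, phi_ray _ hj']
    have hjN : j ≤ N := le_trans (Nat.right_le_pair 0 j) haN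
    have hjN' : j' ≤ N := le_trans (Nat.right_le_pair 0 j') hbN
    constructor
    · rintro ((⟨ha0, m, hm, hb2⟩ | ⟨m, i2, h1, h2, ha2, hb2⟩) | (⟨ha0, hb2⟩ | ⟨j2, hj2, ha2, hb2⟩))
      · exact absurd ha0 (pair_ne_zero hj)
      · obtain ⟨e1, e2⟩ := pe ha2; omega
      · exact absurd ha0 (pair_ne_zero hj)
      · obtain ⟨e1, e2⟩ := pe ha2
        obtain ⟨e3, e4⟩ := pe hb2
        refine Or.inr ⟨N + 1, j, hj, by omega, rfl, ?_⟩
        rw [Nat.pair_eq_pair]; omega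
    · rintro (⟨ha0, m, hm, hb2⟩ | ⟨m, i2, h1, h2, ha2, hb2⟩)
      · exact absurd ha0 (pair_ne_zero hj)
      · obtain ⟨e1, e2⟩ := pe ha2
        obtain ⟨e3, e4⟩ := pe hb2
        refine Or.inr (Or.inr ⟨j, hj, rfl, ?_⟩)
        rw [Nat.pair_eq_pair]; omega


/-- Forward direction. -/
lemma forward_rcis {F : RGraph} (h : pathsJoin.HasRCIS F) : pathsRayJoin.HasRCIS F := by
  obtain ⟨S, hr, hc, e, he⟩ := h
  refine RGraph.hasRCIS_transfer S hr hc e he id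
    (fun a _ => Or.inl a.2) rfl (fun a b _ _ h => Subtype.ext h) ?_
  intro a b ha hb
  show (SimpleGraph.fromRel _).Adj _ _ ↔ (SimpleGraph.fromRel _).Adj _ _
  erw [SimpleGraph.fromRel_adj, SimpleGraph.fromRel_adj]
  constructor
  · rintro ⟨hne, hrel⟩
    refine ⟨fun hh => hne (by
      have h2 := congrArg Subtype.val hh
      exact Subtype.ext h2), ?_⟩
    rcases hrel with h | h
    · exact Or.inl (Or.inl h)
    · exact Or.inr (Or.inl h)
  · rintro ⟨hne, hrel⟩
    refine ⟨fun hh => hne (by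
      refine Subtype.ext ?_
      show (a : ℕ) = (b : ℕ)
      exact congrArg Subtype.val hh), ?_⟩
    rcases hrel with (h | h) | (h | h)
    · exact Or.inl h
    · exact absurd h (fun h => ray_not_rel a.2 b.2 h)
    · exact Or.inr h
    · exact absurd h (fun h => ray_not_rel b.2 a.2 h)

/-- Backward direction. -/
lemma backward_rcis {F : RGraph} (hFfin : Finite F.verts)
    (h : pathsRayJoin.HasRCIS F) : pathsJoin.HasRCIS F := by
  classical
  obtain ⟨S, hr, hc, e, he⟩ := h
  have hSfin : Finite S := Finite.of_equiv _ e.toEquiv.symm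
  have hS : S.Finite := Set.toFinite S
  have hV : (Subtype.val '' S).Finite := hS.image _
  obtain ⟨N, hN⟩ := hV.bddAbove
  have hle : ∀ a : pathsRayJoin.verts, a ∈ S → (a : ℕ) ≤ N := by
    intro a ha
    exact hN ⟨a, ha, rfl⟩
  have hmem : ∀ a : pathsRayJoin.verts, a ∈ S → phi (N + 1) (a : ℕ) ∈ pathsJoin.verts := by
    intro a ha
    rcases mem_cases a.2 with h0 | ⟨k, i, hi1, hik, hp⟩ | ⟨j, hj, hp⟩
    · rw [h0, phi_zero]; exact Or.inl rfl
    · rw [hp, phi_pair _ hi1 hik]; exact Or.inr ⟨k, i, hi1, hik, rfl⟩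
    · rw [hp, phi_ray _ hj]
      have : j ≤ N := le_trans (Nat.right_le_pair 0 j) (hp ▸ hle a ha)
      exact Or.inr ⟨N + 1, j, hj, by omega, rfl⟩
  have hinj : ∀ a b : pathsRayJoin.verts, a ∈ S → b ∈ S →
      phi (N + 1) (a : ℕ) = phi (N + 1) (b : ℕ) → a = b := by
    intro a b ha hb hab
    refine Subtype.ext ?_
    rcases mem_cases a.2 with h0 | ⟨k, i, hi1, hik, hp⟩ | ⟨j, hj, hp⟩ <;>
      rcases mem_cases b.2 with h0' | ⟨k', i', hi1', hik', hp'⟩ | ⟨j', hj', hp'⟩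
    · rw [h0, h0']
    · rw [h0, phi_zero, hp', phi_pair _ hi1' hik'] at hab
      exact absurd hab.symm (pair_ne_zero hi1')
    · rw [h0, phi_zero, hp', phi_ray _ hj'] at hab
      exact absurd hab.symm (pair_ne_zero hj')
    · rw [hp, phi_pair _ hi1 hik, h0', phi_zero] at hab
      exact absurd hab (pair_ne_zero hi1)
    · rw [hp, phi_pair _ hi1 hik, hp', phi_pair _ hi1' hik'] at hab
      rw [hp, hp', hab]
    · rw [hp, phi_pair _ hi1 hik, hp', phi_ray _ hj'] at hab
      obtain ⟨e1, e2⟩ := pe hab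
      have : k ≤ N := le_trans (Nat.left_le_pair k i) (hp ▸ hle a ha)
      omega
    · rw [hp, phi_ray _ hj, h0', phi_zero] at hab
      exact absurd hab (pair_ne_zero hj)
    · rw [hp, phi_ray _ hj, hp', phi_pair _ hi1' hik'] at hab
      obtain ⟨e1, e2⟩ := pe hab
      have : k' ≤ N := le_trans (Nat.left_le_pair k' i') (hp' ▸ hle b hb)
      omega
    · rw [hp, phi_ray _ hj, hp', phi_ray _ hj'] at hab
      obtain ⟨e1, e2⟩ := pe hab
      rw [hp, hp', e2]
  refine RGraph.hasRCIS_transfer S hr hc e he (phi (N + 1)) hmem (by exact phi_zero _)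
    hinj ?_
  intro a b ha hb
  show (SimpleGraph.fromRel _).Adj _ _ ↔ (SimpleGraph.fromRel _).Adj _ _
  erw [SimpleGraph.fromRel_adj, SimpleGraph.fromRel_adj]
  have hneiff : a ≠ b ↔ phi (N + 1) (a : ℕ) ≠ phi (N + 1) (b : ℕ) := by
    constructor
    · intro h hh
      exact h (hinj a b ha hb hh)
    · intro h hh
      exact h (by rw [hh])
  constructor
  · rintro ⟨hne, hrel⟩
    refine ⟨fun hh => (hneiff.mp hne) (by
      have h2 := congrArg Subtype.val hh
      exact h2), ?_⟩
    rcases hrel with h | h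
    · exact Or.inl ((rel_iff a.2 b.2 (hle a ha) (hle b hb)).mp h)
    · exact Or.inr ((rel_iff b.2 a.2 (hle b hb) (hle a ha)).mp h)
  · rintro ⟨hne, hrel⟩
    have hne' : a ≠ b := by
      intro hh
      refine hne (Subtype.ext ?_)
      show phi (N + 1) (a : ℕ) = phi (N + 1) (b : ℕ)
      rw [hh]
    refine ⟨hne', ?_⟩
    rcases hrel with h | h
    · exact Or.inl ((rel_iff a.2 b.2 (hle a ha) (hle b hb)).mpr h)
    · exact Or.inr ((rel_iff b.2 a.2 (hle b hb) (hle a ha)).mpr h)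

lemma nbr_root {w : ℕ} (h : pathsRel 0 w ∨ pathsRel w 0) :
    ∃ m, 1 ≤ m ∧ w = Nat.pair m 1 := by
  rcases h with (⟨_, m, hm, hb⟩ | ⟨k, i, h1, h2, ha, hb⟩) |
    (⟨rfl, k, hk, hb⟩ | ⟨k, i, h1, h2, ha, hb⟩)
  · exact ⟨m, hm, hb⟩
  · exact absurd ha.symm (pair_ne_zero h1)
  · exact absurd hb.symm (pair_ne_zero le_rfl)
  · exact absurd hb.symm (pair_ne_zero (by omega))

lemma nbr_pair {m j w : ℕ} (hj1 : 1 ≤ j) (hjm : j ≤ m)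
    (h : pathsRel (Nat.pair m j) w ∨ pathsRel w (Nat.pair m j)) :
    (w = Nat.pair m (j + 1) ∧ j + 1 ≤ m) ∨ (w = 0 ∧ j = 1) ∨
    (w = Nat.pair m (j - 1) ∧ 2 ≤ j) := by
  rcases h with (⟨h0, _⟩ | ⟨k, i, h1, h2, ha, hb⟩) |
    (⟨rfl, k, hk, hb⟩ | ⟨k, i, h1, h2, ha, hb⟩)
  · exact absurd h0 (pair_ne_zero hj1)
  · obtain ⟨e1, e2⟩ := pe ha
    subst e1; subst e2
    exact Or.inl ⟨hb, h2⟩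
  · obtain ⟨e1, e2⟩ := pe hb
    exact Or.inr (Or.inl ⟨rfl, e2⟩)
  · obtain ⟨e1, e2⟩ := pe hb
    refine Or.inr (Or.inr ⟨?_, by omega⟩)
    rw [ha, Nat.pair_eq_pair]
    omega

/-- `G` has no injective ray from the root. -/
lemma G_no_ray : ¬ ∃ f : ℕ → pathsJoin.verts, Function.Injective f ∧
    f 0 = pathsJoin.root ∧ ∀ j, pathsJoin.adj.Adj (f j) (f (j + 1)) := by
  rintro ⟨f, hinj, h0, hadj⟩
  have hval0 : (f 0 : ℕ) = 0 := by rw [h0]; rfl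
  have hrel : ∀ j, pathsRel (f j : ℕ) (f (j + 1) : ℕ) ∨
      pathsRel (f (j + 1) : ℕ) (f j : ℕ) := by
    intro j
    have := (SimpleGraph.fromRel_adj _ _ _).mp (hadj j)
    exact this.2
  have hzero : ∀ j : ℕ, (f j : ℕ) = 0 → j = 0 := by
    intro j hj
    have : f j = f 0 := Subtype.ext (by rw [hj, hval0])
    exact hinj this
  obtain ⟨m, hm, hf1⟩ := nbr_root (by have := hrel 0; rw [hval0] at this; exact this)
  have key : ∀ j, j ≤ m → ∀ i, 1 ≤ i → i ≤ j → (f i : ℕ) = Nat.pair m i := by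
    intro j
    induction j with
    | zero => omega
    | succ j ih =>
      intro _hjm i hi1 hij
      rcases Nat.lt_or_ge i (j + 1) with hlt | hge
      · exact ih (by omega) i hi1 (by omega)
      · have hi : i = j + 1 := by omega
        subst hi
        rcases Nat.eq_zero_or_pos j with rfl | hj1
        · exact hf1
        · have hfj : (f j : ℕ) = Nat.pair m j := ih (by omega) j hj1 le_rfl
          have h := hrel j
          rw [hfj] at h
          rcases nbr_pair hj1 (by omega) h with ⟨hw, _⟩ | ⟨hw, _⟩ | ⟨hw, h2⟩
          · exact hw
          · exact absurd (hzero _ hw) (by omega)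
          · have hfj1 : (f (j - 1) : ℕ) = Nat.pair m (j - 1) :=
              ih (by omega) (j - 1) (by omega) (by omega)
            have : f (j + 1) = f (j - 1) := Subtype.ext (by rw [hw, hfj1])
            have := hinj this
            omega
  have hfm : (f m : ℕ) = Nat.pair m m := key m le_rfl m hm le_rfl
  have h := hrel m
  rw [hfm] at h
  rcases nbr_pair hm le_rfl h with ⟨hw, h2⟩ | ⟨hw, _⟩ | ⟨hw, h2⟩
  · omega
  · exact absurd (hzero _ hw) (by omega)
  · have hfm1 : (f (m - 1) : ℕ) = Nat.pair m (m - 1) :=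
      key m le_rfl (m - 1) (by omega) (by omega)
    have : f (m + 1) = f (m - 1) := Subtype.ext (by rw [hw, hfm1])
    have := hinj this
    omega

/-- `H` has an injective ray from the root. -/
lemma H_has_ray : ∃ f : ℕ → pathsRayJoin.verts, Function.Injective f ∧
    f 0 = pathsRayJoin.root ∧ ∀ j, pathsRayJoin.adj.Adj (f j) (f (j + 1)) := by
  refine ⟨fun j => ⟨if j = 0 then 0 else Nat.pair 0 j, ?_⟩, ?_, ?_, ?_⟩
  · split
    · exact Or.inl (Or.inl rfl)
    · exact Or.inr ⟨j, Nat.one_le_iff_ne_zero.mpr (by assumption), rfl⟩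
  · intro a b h
    have h := congrArg Subtype.val h
    simp only at h
    by_cases ha : a = 0 <;> by_cases hb : b = 0
    · omega
    · rw [if_pos ha, if_neg hb] at h
      exact absurd h.symm (pair_ne_zero (by omega))
    · rw [if_neg ha, if_pos hb] at h
      exact absurd h (pair_ne_zero (by omega))
    · rw [if_neg ha, if_neg hb] at h
      exact (pe h).2
  · exact Subtype.ext rfl
  · intro j
    refine (SimpleGraph.fromRel_adj _ _ _).mpr
      ⟨?_, Or.inl (Or.inr ?_)⟩
    · intro h
      have h := congrArg Subtype.val h
      simp only at h
      rcases Nat.eq_zero_or_pos j with rfl | hj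
      · rw [if_pos rfl, if_neg (by omega)] at h
        exact pair_ne_zero le_rfl h.symm
      · rw [if_neg (by omega), if_neg (by omega)] at h
        have := (pe h).2
        omega
    · show rayRel (if j = 0 then 0 else Nat.pair 0 j)
        (if j + 1 = 0 then 0 else Nat.pair 0 (j + 1))
      rcases Nat.eq_zero_or_pos j with rfl | hj
      · exact Or.inl ⟨by simp, by simp⟩
      · exact Or.inr ⟨j, hj, by simp [Nat.pos_iff_ne_zero.mp hj], by simp⟩

/-- Let `G` be the join of paths of length `n` for every `n`, and `H` the join
of `G` with one infinite ray. Then `d(G,H) = 0`, i.e. `G` and `H` contain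
exactly the same isomorphism types of finite rooted connected induced
subgraphs, although `G` and `H` are not isomorphic. -/
theorem pathsJoin_distance_zero_not_iso :
    RGraph.dR pathsJoin pathsRayJoin = 0 ∧
    (∀ F : RGraph, Finite F.verts →
      (pathsJoin.HasRCIS F ↔ pathsRayJoin.HasRCIS F)) ∧
    ¬ pathsJoin.Iso pathsRayJoin := by
  have iff2 : ∀ F : RGraph, Finite F.verts →
      (pathsJoin.HasRCIS F ↔ pathsRayJoin.HasRCIS F) :=
    fun F hF => ⟨forward_rcis, backward_rcis hF⟩
  have hsim : ∀ r : ℕ, RGraph.simUpTo r pathsJoin pathsRayJoin :=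
    fun r F hF _ => iff2 F hF
  refine ⟨?_, iff2, ?_⟩
  · have hsup : sSup {x : ℝ≥0∞ | ∃ r : ℕ, x = (r : ℝ≥0∞) ∧
        RGraph.simUpTo r pathsJoin pathsRayJoin} = ⊤ := by
      by_contra h
      obtain ⟨n, hn⟩ := ENNReal.exists_nat_gt h
      have hmem : (n : ℝ≥0∞) ∈ {x : ℝ≥0∞ | ∃ r : ℕ, x = (r : ℝ≥0∞) ∧
          RGraph.simUpTo r pathsJoin pathsRayJoin} := ⟨n, rfl, hsim n⟩
      exact absurd (le_sSup hmem) (not_le.mpr hn)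
    rw [RGraph.dR, hsup]
    exact ENNReal.inv_top
  · rintro ⟨e, he⟩
    obtain ⟨f, hinj, h0, hadj⟩ := H_has_ray
    refine G_no_ray ⟨fun j => e.symm (f j), ?_, ?_, ?_⟩
    · exact e.symm.toEquiv.injective.comp hinj
    · show e.symm (f 0) = pathsJoin.root
      rw [h0, ← he]
      exact e.toEquiv.symm_apply_apply _
    · intro j
      exact e.symm.map_rel_iff.mpr (hadj j)
end

section
/- Let T^{(k)}(z) (k ≥ 1) be a sequence of power series with nonnegative coefficients satisfying T^{(1)}(z) = C(z) and the recursion T^{(k+1)}(z) = C(z)·(1 + M(z)·T^{(k)}(z) + E_k(z)), where C(z) has radius of convergence ρ > 0 with C(ρ) < ∞, M(z) is a power series with nonnegative coefficients, radius of convergence > ρ, and E_k(z) has radius of convergence > ρ. Then for every fixed k there is a constant D_k such that [z^n] T^{(k)}(z) ≤ D_k · [z^n] C(z) for all sufficiently large n, provided [z^n]C(z) ~ A·n^{-3/2}·ρ^{-n}. -/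
open Filter PowerSeries Finset

namespace CoeffCompAux

/-- The model sequence `n^(-3/2) ρ^(-n)`. -/
noncomputable def bb (ρ : ℝ) (n : ℕ) : ℝ := (n : ℝ) ^ (-(3:ℝ)/2) * (ρ ^ n)⁻¹

/-- `g` is eventually dominated by a multiple of the model sequence. -/
def Good (ρ : ℝ) (g : ℕ → ℝ) : Prop := ∃ B ≥ (0:ℝ), ∃ N : ℕ, ∀ n ≥ N, |g n| ≤ B * bb ρ n

lemma bb_nonneg {ρ : ℝ} (hρ : 0 < ρ) (n : ℕ) : 0 ≤ bb ρ n :=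
  mul_nonneg (Real.rpow_nonneg (Nat.cast_nonneg n) _) (inv_nonneg.2 (pow_nonneg hρ.le n))

lemma bb_pos {ρ : ℝ} (hρ : 0 < ρ) {n : ℕ} (hn : 1 ≤ n) : 0 < bb ρ n :=
  mul_pos (Real.rpow_pos_of_pos (by exact_mod_cast Nat.lt_of_lt_of_le Nat.zero_lt_one hn) _)
    (inv_pos.2 (pow_pos hρ n))

lemma bb_mul_pow {ρ : ℝ} (hρ : 0 < ρ) (n : ℕ) :
    bb ρ n * ρ ^ n = (n : ℝ) ^ (-(3:ℝ)/2) := by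
  have : (ρ : ℝ) ^ n ≠ 0 := (pow_pos hρ n).ne'
  rw [bb, mul_assoc, inv_mul_cancel₀ this, mul_one]

lemma good_add {ρ : ℝ} {g1 g2 : ℕ → ℝ} (h1 : Good ρ g1) (h2 : Good ρ g2) :
    Good ρ (fun n => g1 n + g2 n) := by
  obtain ⟨B1, hB1, N1, hN1⟩ := h1
  obtain ⟨B2, hB2, N2, hN2⟩ := h2
  refine ⟨B1 + B2, by positivity, max N1 N2, fun n hn => ?_⟩
  have := hN1 n (le_trans (le_max_left _ _) hn)
  have := hN2 n (le_trans (le_max_right _ _) hn)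
  calc |g1 n + g2 n| ≤ |g1 n| + |g2 n| := abs_add_le _ _
    _ ≤ B1 * bb ρ n + B2 * bb ρ n := by linarith
    _ = (B1 + B2) * bb ρ n := by ring

lemma good_partial {ρ : ℝ} (hρ : 0 < ρ) {g : ℕ → ℝ} (h : Good ρ g) :
    ∃ S ≥ (0:ℝ), ∀ F : Finset ℕ, ∑ j ∈ F, |g j| * ρ ^ j ≤ S := by
  obtain ⟨B, hB, N, hN⟩ := h
  have hsum : Summable (fun j : ℕ => (j : ℝ) ^ (-(3:ℝ)/2)) := by
    rw [show (-(3:ℝ)/2) = (-(3/2) : ℝ) by norm_num]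
    exact Real.summable_nat_rpow.2 (by norm_num)
  set P := ∑' j : ℕ, (j : ℝ) ^ (-(3:ℝ)/2) with hP
  have hP0 : 0 ≤ P := tsum_nonneg fun j => Real.rpow_nonneg (Nat.cast_nonneg j) _
  refine ⟨(∑ j ∈ range N, |g j| * ρ ^ j) + B * P, by positivity, fun F => ?_⟩
  rw [← Finset.sum_filter_add_sum_filter_not F (fun j => j < N)]
  have h1 : ∑ j ∈ F.filter (fun j => j < N), |g j| * ρ ^ j
      ≤ ∑ j ∈ range N, |g j| * ρ ^ j := by
    apply Finset.sum_le_sum_of_subset_of_nonneg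
    · intro j hj
      simp only [Finset.mem_filter] at hj
      exact Finset.mem_range.2 hj.2
    · intro j _ _
      positivity
  have h2 : ∑ j ∈ F.filter (fun j => ¬ j < N), |g j| * ρ ^ j ≤ B * P := by
    calc ∑ j ∈ F.filter (fun j => ¬ j < N), |g j| * ρ ^ j
        ≤ ∑ j ∈ F.filter (fun j => ¬ j < N), B * ((j : ℝ) ^ (-(3:ℝ)/2)) := by
          apply Finset.sum_le_sum
          intro j hj
          simp only [Finset.mem_filter, not_lt] at hj
          have := hN j hj.2
          have hb := bb_mul_pow hρ j
          calc |g j| * ρ ^ j ≤ (B * bb ρ j) * ρ ^ j := by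
                have : 0 ≤ (ρ:ℝ) ^ j := (pow_pos hρ j).le
                apply mul_le_mul_of_nonneg_right (hN j hj.2) this
            _ = B * ((j : ℝ) ^ (-(3:ℝ)/2)) := by rw [mul_assoc, hb]
      _ = B * ∑ j ∈ F.filter (fun j => ¬ j < N), ((j : ℝ) ^ (-(3:ℝ)/2)) := by
          rw [Finset.mul_sum]
      _ ≤ B * P := by
          apply mul_le_mul_of_nonneg_left _ hB
          exact Summable.sum_le_tsum _ (fun j _ => Real.rpow_nonneg (Nat.cast_nonneg j) _) hsum
  linarith

/-- Key technical bound: if `|x| ≤ B·bb ρ m` with `m + j = n` and `n ≤ 2m`, then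
`|x| ≤ 2^(3/2)·B·bb ρ n·ρ^j`. -/
lemma key_bound {ρ B : ℝ} (hρ : 0 < ρ) (hB : 0 ≤ B) {m n j : ℕ} (hmn : m + j = n)
    (h2 : n ≤ 2 * m) (hn : 1 ≤ n) {x : ℝ} (hx : |x| ≤ B * bb ρ m) :
    |x| ≤ (2:ℝ) ^ ((3:ℝ)/2) * B * bb ρ n * ρ ^ j := by
  have hn0 : (0:ℝ) < (n : ℝ) := by exact_mod_cast hn
  have hm2 : (n : ℝ) / 2 ≤ (m : ℝ) := by
    have : (n : ℝ) ≤ 2 * (m : ℝ) := by exact_mod_cast h2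
    linarith
  have hstep : ((m : ℝ)) ^ (-(3:ℝ)/2) ≤ (2:ℝ) ^ ((3:ℝ)/2) * (n : ℝ) ^ (-(3:ℝ)/2) := by
    have h1 : ((m : ℝ)) ^ (-(3:ℝ)/2) ≤ ((n : ℝ)/2) ^ (-(3:ℝ)/2) :=
      Real.rpow_le_rpow_of_nonpos (by positivity) hm2 (by norm_num)
    have h2' : ((n : ℝ)/2) ^ (-(3:ℝ)/2) = (2:ℝ) ^ ((3:ℝ)/2) * (n : ℝ) ^ (-(3:ℝ)/2) := by
      rw [Real.div_rpow (by positivity) (by norm_num),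
        show ((2:ℝ) ^ (-(3:ℝ)/2)) = ((2:ℝ) ^ ((3:ℝ)/2))⁻¹ by
          rw [show (-(3:ℝ)/2) = -((3:ℝ)/2) by ring, Real.rpow_neg (by norm_num : (0:ℝ) ≤ 2)],
        div_eq_mul_inv, inv_inv]
      ring
    exact h2' ▸ h1
  have hpow : (ρ : ℝ) ^ n = ρ ^ m * ρ ^ j := by rw [← pow_add, hmn]
  have hmne : (ρ : ℝ) ^ m ≠ 0 := (pow_pos hρ m).ne'
  have hjne : (ρ : ℝ) ^ j ≠ 0 := (pow_pos hρ j).ne'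
  have hinv : ((ρ : ℝ) ^ m)⁻¹ = ρ ^ j * ((ρ : ℝ) ^ n)⁻¹ := by
    rw [hpow]
    field_simp
  calc |x| ≤ B * bb ρ m := hx
    _ = B * ((m : ℝ) ^ (-(3:ℝ)/2)) * (ρ ^ j * ((ρ : ℝ) ^ n)⁻¹) := by
        rw [bb, ← hinv]; ring
    _ ≤ B * ((2:ℝ) ^ ((3:ℝ)/2) * (n : ℝ) ^ (-(3:ℝ)/2)) * (ρ ^ j * ((ρ : ℝ) ^ n)⁻¹) := by
        apply mul_le_mul_of_nonneg_right _ (by positivity)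
        exact mul_le_mul_of_nonneg_left hstep hB
    _ = (2:ℝ) ^ ((3:ℝ)/2) * B * bb ρ n * ρ ^ j := by rw [bb]; ring

/-- Convolution of two `Good` sequences is `Good`. -/
lemma good_conv {ρ : ℝ} (hρ : 0 < ρ) {g1 g2 : ℕ → ℝ} (h1 : Good ρ g1) (h2 : Good ρ g2) :
    Good ρ (fun n => ∑ j ∈ range (n + 1), g1 j * g2 (n - j)) := by
  obtain ⟨S1, hS1, hS1'⟩ := good_partial hρ h1
  obtain ⟨S2, hS2, hS2'⟩ := good_partial hρ h2
  obtain ⟨B1, hB1, N1, hN1⟩ := h1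
  obtain ⟨B2, hB2, N2, hN2⟩ := h2
  set B := max B1 B2 with hBdef
  have hB : (0:ℝ) ≤ B := le_trans hB1 (le_max_left _ _)
  refine ⟨(2:ℝ) ^ ((3:ℝ)/2) * B * (S1 + S2), by positivity, 2 * max N1 N2 + 1, fun n hn => ?_⟩
  have hn1 : 1 ≤ n := by omega
  have hterm : ∀ j ∈ range (n + 1), |g1 j * g2 (n - j)| ≤
      ((2:ℝ) ^ ((3:ℝ)/2) * B * bb ρ n) * (|g1 j| * ρ ^ j + |g2 (n - j)| * ρ ^ (n - j)) := by
    intro j hj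
    have hjn : j ≤ n := by simpa using Nat.lt_succ_iff.mp (Finset.mem_range.mp hj)
    have hK : (0:ℝ) ≤ (2:ℝ) ^ ((3:ℝ)/2) * B * bb ρ n := by
      have := bb_nonneg hρ n; positivity
    rcases (show n ≤ 2 * (n - j) ∨ n ≤ 2 * j by omega) with hc | hc
    · -- n - j is large
      have hNj : N2 ≤ n - j := by omega
      have hx : |g2 (n - j)| ≤ B * bb ρ (n - j) :=
        le_trans (hN2 _ hNj) (mul_le_mul_of_nonneg_right (le_max_right _ _) (bb_nonneg hρ _))
      have hkb := key_bound hρ hB (show (n - j) + j = n by omega) hc hn1 hx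
      calc |g1 j * g2 (n - j)| = |g1 j| * |g2 (n - j)| := abs_mul _ _
        _ ≤ |g1 j| * ((2:ℝ) ^ ((3:ℝ)/2) * B * bb ρ n * ρ ^ j) :=
            mul_le_mul_of_nonneg_left hkb (abs_nonneg _)
        _ = ((2:ℝ) ^ ((3:ℝ)/2) * B * bb ρ n) * (|g1 j| * ρ ^ j) := by ring
        _ ≤ _ := by
            apply mul_le_mul_of_nonneg_left _ hK
            have : 0 ≤ |g2 (n - j)| * ρ ^ (n - j) := by positivity
            linarith
    · -- j is large
      have hNj : N1 ≤ j := by omega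
      have hx : |g1 j| ≤ B * bb ρ j :=
        le_trans (hN1 _ hNj) (mul_le_mul_of_nonneg_right (le_max_left _ _) (bb_nonneg hρ _))
      have hkb := key_bound hρ hB (show j + (n - j) = n by omega) hc hn1 hx
      calc |g1 j * g2 (n - j)| = |g1 j| * |g2 (n - j)| := abs_mul _ _
        _ ≤ ((2:ℝ) ^ ((3:ℝ)/2) * B * bb ρ n * ρ ^ (n - j)) * |g2 (n - j)| :=
            mul_le_mul_of_nonneg_right hkb (abs_nonneg _)
        _ = ((2:ℝ) ^ ((3:ℝ)/2) * B * bb ρ n) * (|g2 (n - j)| * ρ ^ (n - j)) := by ring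
        _ ≤ _ := by
            apply mul_le_mul_of_nonneg_left _ hK
            have : 0 ≤ |g1 j| * ρ ^ j := by positivity
            linarith
  calc |∑ j ∈ range (n + 1), g1 j * g2 (n - j)|
      ≤ ∑ j ∈ range (n + 1), |g1 j * g2 (n - j)| := Finset.abs_sum_le_sum_abs _ _
    _ ≤ ∑ j ∈ range (n + 1),
        ((2:ℝ) ^ ((3:ℝ)/2) * B * bb ρ n) * (|g1 j| * ρ ^ j + |g2 (n - j)| * ρ ^ (n - j)) :=
        Finset.sum_le_sum hterm
    _ = ((2:ℝ) ^ ((3:ℝ)/2) * B * bb ρ n) *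
        ((∑ j ∈ range (n + 1), |g1 j| * ρ ^ j) +
         (∑ j ∈ range (n + 1), |g2 (n - j)| * ρ ^ (n - j))) := by
        rw [← Finset.mul_sum, Finset.sum_add_distrib]
    _ ≤ ((2:ℝ) ^ ((3:ℝ)/2) * B * bb ρ n) * (S1 + S2) := by
        apply mul_le_mul_of_nonneg_left _ (by have := bb_nonneg hρ n; positivity)
        have e2 : ∑ j ∈ range (n + 1), |g2 (n - j)| * ρ ^ (n - j)
            = ∑ j ∈ range (n + 1), |g2 j| * ρ ^ j := by
          rw [← Finset.sum_range_reflect]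
          apply Finset.sum_congr rfl
          intro j hj
          have hjn : j ≤ n := Nat.lt_succ_iff.mp (Finset.mem_range.mp hj)
          have e1 : n + 1 - 1 - j = n - j := by omega
          have e2 : n - (n - j) = j := by omega
          rw [e1, e2]
        rw [e2]
        have := hS1' (range (n + 1))
        have := hS2' (range (n + 1))
        linarith
    _ = ((2:ℝ) ^ ((3:ℝ)/2) * B * (S1 + S2)) * bb ρ n := by ring

/-- A sequence with geometric decay at some rate strictly faster than `ρ⁻¹` is `Good`. -/
lemma small_good {ρ : ℝ} (hρ : 0 < ρ) {g : ℕ → ℝ}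
    (h : ∃ r > ρ, ∃ K : ℝ, ∀ n, |g n| ≤ K / r ^ n) : Good ρ g := by
  obtain ⟨r, hr, K, hK⟩ := h
  have hr0 : 0 < r := hρ.trans hr
  have hK0 : 0 ≤ K := le_trans (abs_nonneg (g 0)) (by simpa using hK 0)
  set q : ℝ := ρ / r with hq
  have hq0 : 0 ≤ q := by positivity
  have hq1 : q < 1 := (div_lt_one hr0).2 hr
  have hten : Tendsto (fun n : ℕ => K * ((n : ℝ) ^ 2 * q ^ n)) atTop (nhds 0) := by
    simpa using (tendsto_pow_const_mul_const_pow_of_lt_one 2 hq0 hq1).const_mul K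
  have hev : ∀ᶠ n : ℕ in atTop, K * ((n : ℝ) ^ 2 * q ^ n) ≤ 1 := by
    filter_upwards [hten.eventually_mem (Iio_mem_nhds (by norm_num : (0:ℝ) < 1))] with n hn
    exact le_of_lt hn
  obtain ⟨N, hN⟩ := (hev.and (eventually_ge_atTop 1)).exists_forall_of_atTop
  refine ⟨1, zero_le_one, N, fun n hn => ?_⟩
  obtain ⟨h1, hn1'⟩ := hN n hn
  have hn1 : (1:ℝ) ≤ (n : ℝ) := by exact_mod_cast hn1'
  have hn0 : (0:ℝ) < (n : ℝ) := by linarith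
  have hr32 : (0:ℝ) < (n : ℝ) ^ ((3:ℝ)/2) := Real.rpow_pos_of_pos hn0 _
  have step1 : |g n| ≤ K * q ^ n * (ρ ^ n)⁻¹ := by
    have : K / r ^ n = K * q ^ n * (ρ ^ n)⁻¹ := by
      rw [hq, div_pow]
      field_simp
    rw [← this]; exact hK n
  have step2 : K * q ^ n ≤ (n : ℝ) ^ (-(3:ℝ)/2) := by
    rw [show (-(3:ℝ)/2) = -((3:ℝ)/2) by ring, Real.rpow_neg hn0.le, ← one_div,
      le_div_iff₀ hr32]
    have h32 : (n : ℝ) ^ ((3:ℝ)/2) ≤ (n : ℝ) ^ 2 := by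
      rw [← Real.rpow_two]
      exact Real.rpow_le_rpow_of_exponent_le hn1 (by norm_num)
    have hqn : (0:ℝ) ≤ q ^ n := by positivity
    calc K * q ^ n * (n : ℝ) ^ ((3:ℝ)/2) ≤ K * q ^ n * (n : ℝ) ^ 2 :=
          mul_le_mul_of_nonneg_left h32 (by positivity)
      _ = K * ((n : ℝ) ^ 2 * q ^ n) := by ring
      _ ≤ 1 := h1
  calc |g n| ≤ K * q ^ n * (ρ ^ n)⁻¹ := step1
    _ ≤ (n : ℝ) ^ (-(3:ℝ)/2) * (ρ ^ n)⁻¹ := by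
        apply mul_le_mul_of_nonneg_right step2 (by positivity)
    _ = 1 * bb ρ n := by rw [bb, one_mul]

lemma good_one {ρ : ℝ} : Good ρ (fun n => coeff n (1 : PowerSeries ℝ)) := by
  refine ⟨0, le_refl 0, 1, fun n hn => ?_⟩
  show |coeff n (1 : PowerSeries ℝ)| ≤ 0 * bb ρ n
  rw [coeff_one, if_neg (by omega)]
  simp

end CoeffCompAux

open CoeffCompAux

/-- Inductive coefficient-comparison step: if `T⁽¹⁾ = C`,
`T⁽ᵏ⁺¹⁾ = C·(1 + M·T⁽ᵏ⁾ + E_k)`, all coefficients of `T⁽ᵏ⁾` and `M` are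
nonnegative, `M` and each `E_k` have radius of convergence `> ρ`, and the
coefficients of `C` satisfy `[zⁿ]C ~ A·n^(−3/2)·ρ^(−n)`, then for each fixed
`k` the coefficients of `T⁽ᵏ⁾` are eventually bounded by a constant multiple of
those of `C`. -/
theorem coefficient_comparison (ρ A : ℝ) (hρ : 0 < ρ) (hA : 0 < A)
    (C M : PowerSeries ℝ) (E : ℕ → PowerSeries ℝ) (T : ℕ → PowerSeries ℝ)
    (hT1 : T 1 = C)
    (hrec : ∀ k ≥ 1, T (k + 1) = C * (1 + M * T k + E k))
    (hTnonneg : ∀ k n, 0 ≤ coeff n (T k))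
    (hMnonneg : ∀ n, 0 ≤ coeff n M)
    (hM : ∃ ρ' > ρ, ∃ K : ℝ, ∀ n, |coeff n M| ≤ K / ρ' ^ n)
    (hE : ∀ k, ∃ ρ' > ρ, ∃ K : ℝ, ∀ n, |coeff n (E k)| ≤ K / ρ' ^ n)
    (hC : Tendsto
      (fun n : ℕ => coeff n C / (A * (n : ℝ) ^ (-(3 : ℝ) / 2) * (ρ ^ n)⁻¹))
      atTop (nhds 1)) :
    ∀ k ≥ 1, ∃ D : ℝ, ∃ N : ℕ, ∀ n ≥ N,
      coeff n (T k) ≤ D * coeff n C := by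
  -- Two-sided eventual bounds on the coefficients of `C`.
  have hevC : ∀ᶠ n : ℕ in atTop,
      coeff n C / (A * (n : ℝ) ^ (-(3 : ℝ) / 2) * (ρ ^ n)⁻¹) ∈ Set.Ioo (1/2 : ℝ) 2 :=
    hC.eventually_mem (Ioo_mem_nhds (by norm_num) (by norm_num))
  obtain ⟨Nc, hNc'⟩ := (hevC.and (eventually_ge_atTop 1)).exists_forall_of_atTop
  have hNc : ∀ n ≥ Nc, A/2 * bb ρ n ≤ coeff n C ∧ |coeff n C| ≤ 2 * A * bb ρ n := by
    intro n hn
    obtain ⟨hio, hn1⟩ := hNc' n hn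
    have hd : 0 < A * bb ρ n := mul_pos hA (bb_pos hρ hn1)
    have heq : A * (n : ℝ) ^ (-(3 : ℝ) / 2) * (ρ ^ n)⁻¹ = A * bb ρ n := by
      rw [bb]; ring
    rw [heq] at hio
    have hlt : coeff n C < 2 * (A * bb ρ n) := (div_lt_iff₀ hd).mp hio.2
    have hgt : 1/2 * (A * bb ρ n) < coeff n C := (lt_div_iff₀ hd).mp hio.1
    have hpos : 0 < coeff n C := lt_of_lt_of_le (by positivity) hgt.le
    constructor
    · nlinarith
    · rw [abs_of_pos hpos]; nlinarith
  have goodC : Good ρ (fun n => coeff n C) :=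
    ⟨2 * A, by positivity, Nc, fun n hn => (hNc n hn).2⟩
  -- All the `T k` have `Good` coefficient sequences.
  have key : ∀ k, 1 ≤ k → Good ρ (fun n => coeff n (T k)) := by
    intro k hk
    induction k, hk using Nat.le_induction with
    | base => simpa only [hT1] using goodC
    | succ k hk ih =>
      have hco : (fun n => coeff n (T (k + 1)))
          = fun n => ∑ j ∈ Finset.range (n + 1),
              coeff j C * coeff (n - j) (1 + M * T k + E k) := by
        funext n
        rw [hrec k hk, coeff_mul, Finset.Nat.sum_antidiagonal_eq_sum_range_succ_mk]
      rw [hco]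
      have hrest : Good ρ (fun n => coeff n (1 + M * T k + E k)) := by
        have hco2 : (fun n => coeff n (1 + M * T k + E k))
            = fun n => coeff n (1 : PowerSeries ℝ)
                + ((∑ j ∈ Finset.range (n + 1),
                      coeff j M * coeff (n - j) (T k)) + coeff n (E k)) := by
          funext n
          rw [map_add, map_add, coeff_mul, Finset.Nat.sum_antidiagonal_eq_sum_range_succ_mk]
          ring
        rw [hco2]
        exact good_add good_one
          (good_add (good_conv hρ (small_good hρ hM) ih) (small_good hρ (hE k)))
      exact good_conv hρ goodC hrest
  -- Conclude.
  intro k hk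
  obtain ⟨B, hB, N, hN⟩ := key k hk
  refine ⟨B * (2/A), max N Nc, fun n hn => ?_⟩
  have h1 := hN n (le_trans (le_max_left _ _) hn)
  have h2 := (hNc n (le_trans (le_max_right _ _) hn)).1
  have h3 : bb ρ n ≤ (2/A) * coeff n C := by
    have hmul := mul_le_mul_of_nonneg_left h2 (by positivity : (0:ℝ) ≤ 2/A)
    calc bb ρ n = (2/A) * (A/2 * bb ρ n) := by field_simp
      _ ≤ (2/A) * coeff n C := hmul
  calc coeff n (T k) ≤ |coeff n (T k)| := le_abs_self _
    _ ≤ B * bb ρ n := h1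
    _ ≤ B * ((2/A) * coeff n C) := mul_le_mul_of_nonneg_left h3 hB
    _ = B * (2/A) * coeff n C := by ring
end
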